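/- arXiv:2005.12915 — 4 statements merged into one kernel-verified Lean document; each statement's English description precedes it below -/
import Mathlib

section
/- Let m, n, d be positive integers with m ≥ 3d and n ≥ 2. Then K_{n,m} is proportionally (m+n−d−1)-choosable; consequently χ_pc(K_{n,m}) ≤ m+n−d−1. -/
open Finset SimpleGraph

/-- `L` is a `k`-assignment: every vertex gets a list (finset) of exactly `k` colors. -/
def IsKAssignment {V : Type*} (L : V → Finset ℕ) (k : ℕ) : Prop :=
  ∀ v, (L v).card = k

/-- The multiplicity `η_L(c)`: the number of vertices whose list contains `c`. -/
def mult {V : Type*} [Fintype V] (L : V → Finset ℕ) (c : ℕ) : ℕ :=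
  (Finset.univ.filter (fun v => c ∈ L v)).card

/-- The palette of a list assignment: the union of all the lists. -/
def palette {V : Type*} [Fintype V] (L : V → Finset ℕ) : Finset ℕ :=
  Finset.univ.biUnion L

/-- A proper `L`-coloring: each vertex is colored from its list, and adjacent
vertices get different colors. -/
def IsProperListColoring {V : Type*} (G : SimpleGraph V) (L : V → Finset ℕ)
    (f : V → ℕ) : Prop :=
  (∀ v, f v ∈ L v) ∧ ∀ ⦃u w⦄, G.Adj u w → f u ≠ f w

/-- A proportional `L`-coloring: a proper `L`-coloring such that each color `c` in
the palette is used `⌊η(c)/k⌋` or `⌈η(c)/k⌉` times. -/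
def IsProportionalColoring {V : Type*} [Fintype V] (G : SimpleGraph V)
    (L : V → Finset ℕ) (k : ℕ) (f : V → ℕ) : Prop :=
  IsProperListColoring G L f ∧
    ∀ c ∈ palette L,
      (Finset.univ.filter (fun v => f v = c)).card = mult L c / k ∨
      (Finset.univ.filter (fun v => f v = c)).card = (mult L c + k - 1) / k

/-- `G` is proportionally `k`-choosable. -/
def ProportionallyChoosable {V : Type*} [Fintype V] (G : SimpleGraph V) (k : ℕ) : Prop :=
  ∀ L : V → Finset ℕ, IsKAssignment L k → ∃ f, IsProportionalColoring G L k f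

/-- The proportional choice number `χ_pc(G)`. -/
noncomputable def propChoiceNumber {V : Type*} [Fintype V] (G : SimpleGraph V) : ℕ :=
  sInf {k | ProportionallyChoosable G k}

/-- An equitable `k`-coloring exists: a proper coloring with `k` (possibly empty)
color classes whose sizes pairwise differ by at most one. -/
def EquitablyColorable {V : Type*} [Fintype V] (G : SimpleGraph V) (k : ℕ) : Prop :=
  ∃ f : V → Fin k, (∀ ⦃u w⦄, G.Adj u w → f u ≠ f w) ∧
    ∀ c c' : Fin k,
      (Finset.univ.filter (fun v => f v = c)).card ≤
        (Finset.univ.filter (fun v => f v = c')).card + 1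

/-- The complete bipartite graph `K_{n,m}`. -/
abbrev KBip (n m : ℕ) : SimpleGraph (Fin n ⊕ Fin m) :=
  completeBipartiteGraph (Fin n) (Fin m)

namespace Stmt12Proof

variable {n m : ℕ}

abbrev VV (n m : ℕ) := Fin n ⊕ Fin m

section Defs

def supp (L : VV n m → Finset ℕ) (c : ℕ) : Finset (VV n m) :=
  univ.filter (fun v => c ∈ L v)

def fib (g : VV n m → ℕ) (c : ℕ) : Finset (VV n m) :=
  univ.filter (fun v => g v = c)

def AS (n m : ℕ) : Finset (VV n m) := univ.filter (fun v => v.isLeft)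
def BS (n m : ℕ) : Finset (VV n m) := univ.filter (fun v => v.isRight)

def Good (L : VV n m → Finset ℕ) (k : ℕ) (g : VV n m → ℕ) : Prop :=
  (∀ v, g v ∈ L v) ∧ (∀ c, (fib g c).card ≤ 2) ∧
  (∀ c, (fib g c).card = 2 → k + 1 ≤ (supp L c).card) ∧
  (∀ c, k ≤ (supp L c).card → 1 ≤ (fib g c).card)

def MixedSet (g : VV n m → ℕ) : Finset ℕ :=
  (univ.image g).filter (fun c => ((fib g c) ∩ AS n m).Nonempty ∧ ((fib g c) ∩ BS n m).Nonempty)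

end Defs

section Helpers

@[simp] lemma mem_supp {L : VV n m → Finset ℕ} {c : ℕ} {v : VV n m} :
    v ∈ supp L c ↔ c ∈ L v := by simp [supp]

@[simp] lemma mem_fib {g : VV n m → ℕ} {c : ℕ} {v : VV n m} :
    v ∈ fib g c ↔ g v = c := by simp [fib]

lemma mem_mixedSet {g : VV n m → ℕ} {c : ℕ} :
    c ∈ MixedSet g ↔ ((fib g c) ∩ AS n m).Nonempty ∧ ((fib g c) ∩ BS n m).Nonempty := by
  rw [MixedSet, mem_filter, and_iff_right_iff_imp]
  rintro ⟨⟨v, hv⟩, -⟩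
  exact mem_image.2 ⟨v, mem_univ v, (mem_fib.1 (mem_inter.1 hv).1)⟩

lemma self_mem_fib (g : VV n m → ℕ) (v : VV n m) : v ∈ fib g (g v) := by simp

lemma fib_nonempty_iff {g : VV n m → ℕ} {c : ℕ} :
    (fib g c).Nonempty ↔ c ∈ univ.image g := by
  constructor
  · rintro ⟨v, hv⟩; exact mem_image.2 ⟨v, mem_univ v, (mem_fib.1 hv)⟩
  · rintro h; obtain ⟨v, -, hv⟩ := mem_image.1 h; exact ⟨v, mem_fib.2 hv⟩

lemma card_AS : (AS n m).card = n := by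
  have : (AS n m) = (univ : Finset (Fin n)).map ⟨Sum.inl, Sum.inl_injective⟩ := by
    ext v; cases v <;> simp [AS]
  rw [this, card_map, card_univ, Fintype.card_fin]

lemma card_BS : (BS n m).card = m := by
  have : (BS n m) = (univ : Finset (Fin m)).map ⟨Sum.inr, Sum.inr_injective⟩ := by
    ext v; cases v <;> simp [BS]
  rw [this, card_map, card_univ, Fintype.card_fin]

lemma card_inter_AS_BS (s : Finset (VV n m)) :
    (s ∩ AS n m).card + (s ∩ BS n m).card = s.card := by
  classical
  have h1 : s ∩ AS n m = s.filter (fun v => v.isLeft) := by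
    ext v; simp [AS, mem_filter]
  have h2 : s ∩ BS n m = s.filter (fun v => ¬ (v.isLeft : Prop)) := by
    ext v; cases v <;> simp [BS, mem_filter]
  rw [h1, h2, card_filter_add_card_filter_not]

lemma card_supp_le (L : VV n m → Finset ℕ) (c : ℕ) : (supp L c).card ≤ n + m := by
  calc (supp L c).card ≤ (univ : Finset (VV n m)).card := card_le_card (filter_subset _ _)
  _ = n + m := by simp [card_univ]

/-- Double counting: total list sizes over `W` equal total multiplicities-in-`W` over `P`. -/
lemma double_count (L : VV n m → Finset ℕ) (W : Finset (VV n m)) (P : Finset ℕ)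
    (h : ∀ v ∈ W, L v ⊆ P) :
    ∑ v ∈ W, (L v).card = ∑ c ∈ P, (W.filter (fun v => c ∈ L v)).card := by
  classical
  have : ∀ v ∈ W, (L v).card = ∑ c ∈ P, (if c ∈ L v then 1 else 0) := by
    intro v hv
    rw [Finset.sum_ite_mem]
    have : P ∩ L v = L v := by
      apply Finset.inter_eq_right.2 (h v hv)
    rw [this, Finset.sum_const, smul_eq_mul, mul_one]
  rw [Finset.sum_congr rfl this, Finset.sum_comm]
  refine Finset.sum_congr rfl fun c _ => ?_
  rw [Finset.card_filter]

/-- Dual double counting over supports. -/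
lemma double_count_supp (L : VV n m → Finset ℕ) (T : Finset ℕ) :
    ∑ c ∈ T, (supp L c).card = ∑ v : VV n m, ((L v) ∩ T).card := by
  classical
  have : ∀ c ∈ T, (supp L c).card = ∑ v : VV n m, (if c ∈ L v then 1 else 0) := by
    intro c _
    rw [supp, Finset.card_filter]
  rw [Finset.sum_congr rfl this, Finset.sum_comm]
  refine Finset.sum_congr rfl fun v _ => ?_
  have h2 : L v ∩ T = T.filter (fun c => c ∈ L v) := by
    ext c; simp [mem_filter, and_comm]
  rw [h2, Finset.card_filter]

end Helpers

section Phase1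
variable {L : VV n m → Finset ℕ} {k d : ℕ}

lemma cover_lemma (hk : 1 ≤ k) (hL : ∀ v, (L v).card = k) (T : Finset ℕ)
    (hT : ∀ c ∈ T, k ≤ (supp L c).card) :
    T.card ≤ (T.biUnion (supp L)).card := by
  classical
  have hmass : T.card * k ≤ ∑ c ∈ T, (supp L c).card := by
    calc T.card * k = ∑ _c ∈ T, k := by rw [sum_const, smul_eq_mul]
    _ ≤ _ := sum_le_sum hT
  rw [double_count_supp] at hmass
  have hsum : ∑ v : VV n m, ((L v) ∩ T).card = ∑ v ∈ T.biUnion (supp L), ((L v) ∩ T).card := by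
    refine (Finset.sum_subset (subset_univ _) ?_).symm
    intro v _ hv
    rw [card_eq_zero]
    ext c; simp only [mem_inter, notMem_empty, iff_false, not_and]
    intro h1 h2
    exact absurd (mem_biUnion.2 ⟨c, h2, mem_supp.2 h1⟩) hv
  rw [hsum] at hmass
  have hub : ∑ v ∈ T.biUnion (supp L), ((L v) ∩ T).card ≤ (T.biUnion (supp L)).card * k := by
    rw [← smul_eq_mul, ← sum_const]
    refine sum_le_sum fun v _ => ?_
    calc ((L v) ∩ T).card ≤ (L v).card := card_le_card inter_subset_left
    _ = k := hL v
  exact Nat.le_of_mul_le_mul_right (hmass.trans hub) hk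

lemma hall_vertex (hnk : n ≤ k) (hNk : n + m = k + d + 1) (hdk : d + 2 ≤ k)
    (hL : ∀ v, (L v).card = k) (W : Finset (VV n m)) :
    W.card ≤ (W.biUnion L).card +
      ((W.biUnion L).filter
        (fun c => k + 1 ≤ (supp L c).card ∧ ∃ v ∈ W, (v.isRight : Prop) ∧ c ∈ L v)).card := by
  classical
  rcases W.eq_empty_or_nonempty with rfl | ⟨v0, hv0⟩
  · simp
  set P := W.biUnion L with hP
  set X := P.filter (fun c => k + 1 ≤ (supp L c).card ∧ ∃ v ∈ W, (v.isRight : Prop) ∧ c ∈ L v) with hX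
  by_cases hWk : W.card ≤ k
  · calc W.card ≤ k := hWk
      _ = (L v0).card := (hL v0).symm
      _ ≤ P.card := card_le_card (fun c hc => mem_biUnion.2 ⟨v0, hv0, hc⟩)
      _ ≤ _ := Nat.le_add_right _ _
  push_neg at hWk
  have hXP : X ⊆ P := filter_subset _ _
  have hmass : W.card * k = ∑ c ∈ P, (W.filter (fun v => c ∈ L v)).card := by
    rw [← double_count L W P (fun v hv c hc => mem_biUnion.2 ⟨v, hv, hc⟩)]
    rw [Finset.sum_congr rfl (fun v _ => hL v), sum_const, smul_eq_mul]
  have hbound : ∀ c ∈ P, (W.filter (fun v => c ∈ L v)).card ≤ if c ∈ X then W.card else k := by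
    intro c hc
    by_cases hcX : c ∈ X
    · simp only [hcX, if_true]
      exact card_le_card (filter_subset _ _)
    · simp only [hcX, if_false]
      have hnp : ¬(k + 1 ≤ (supp L c).card ∧ ∃ v ∈ W, (v.isRight : Prop) ∧ c ∈ L v) := by
        intro h; exact hcX (mem_filter.2 ⟨hc, h⟩)
      by_cases hbig : k + 1 ≤ (supp L c).card
      · have hno : ¬ ∃ v ∈ W, (v.isRight : Prop) ∧ c ∈ L v := fun he => hnp ⟨hbig, he⟩
        have hsub : W.filter (fun v => c ∈ L v) ⊆ AS n m := by
          intro v hv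
          rw [mem_filter] at hv
          rcases v with v | v
          · simp [AS]
          · exact absurd ⟨Sum.inr v, hv.1, by simp, hv.2⟩ hno
        calc _ ≤ (AS n m).card := card_le_card hsub
          _ = n := card_AS
          _ ≤ k := hnk
      · push_neg at hbig
        calc (W.filter (fun v => c ∈ L v)).card ≤ (supp L c).card := by
              apply card_le_card; intro v hv; rw [mem_filter] at hv; exact mem_supp.2 hv.2
          _ ≤ k := by omega
  have hsum2 : W.card * k ≤ X.card * W.card + (P.filter (fun c => ¬ (c ∈ X))).card * k := by
    rw [hmass]
    calc ∑ c ∈ P, (W.filter (fun v => c ∈ L v)).card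
        ≤ ∑ c ∈ P, (if c ∈ X then W.card else k) := sum_le_sum hbound
      _ = ∑ c ∈ P.filter (fun c => c ∈ X), W.card
          + ∑ c ∈ P.filter (fun c => ¬ (c ∈ X)), k := Finset.sum_ite _ _
      _ = X.card * W.card + (P.filter (fun c => ¬ (c ∈ X))).card * k := by
          rw [sum_const, sum_const, smul_eq_mul, smul_eq_mul,
            filter_mem_eq_inter, Finset.inter_eq_right.2 hXP]
  have hfc : (P.filter (fun c => ¬ (c ∈ X))).card = P.card - X.card := by
    rw [Finset.filter_not]
    have hfx : P.filter (fun c => c ∈ X) = X := by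
      rw [filter_mem_eq_inter, Finset.inter_eq_right.2 hXP]
    rw [hfx, card_sdiff_of_subset hXP]
  rw [hfc] at hsum2
  -- final arithmetic
  set w := W.card; set p := P.card; set x := X.card
  have hxp : x ≤ p := card_le_card hXP
  by_contra hco
  push_neg at hco
  have hco' : p + x + 1 ≤ w := hco
  have hwle : w ≤ k + d + 1 := by
    have : w ≤ n + m := by
      calc w ≤ (univ : Finset (VV n m)).card := card_le_card (subset_univ W)
        _ = n + m := by simp [card_univ]
    omega
  have main' : w * k + x * k ≤ x * w + p * k := by
    have hx1 : x * k ≤ p * k := Nat.mul_le_mul_right k hxp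
    calc w * k + x * k ≤ (x * w + (p - x) * k) + x * k := add_le_add_left hsum2 _
      _ = x * w + ((p - x) * k + x * k) := by ring
      _ = x * w + p * k := by rw [← Nat.add_mul]; congr 2; omega
  have h3' : p * k + x * k + k ≤ w * k := by
    have := Nat.mul_le_mul_right k hco'
    calc p * k + x * k + k = (p + x + 1) * k := by ring
      _ ≤ w * k := this
  have h4' : x * w ≤ x * k + x * d + x := by
    have := Nat.mul_le_mul_left x hwle
    calc x * w ≤ x * (k + d + 1) := this
      _ = x * k + x * d + x := by ring
  have hk2' : x * d + 2 * x ≤ x * k := by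
    have := Nat.mul_le_mul_left x hdk
    calc x * d + 2 * x = x * (d + 2) := by ring
      _ ≤ x * k := this
  have hk1 : 1 ≤ k := by omega
  linarith

lemma slots_big (hNk : n + m = k + d + 1) (hdk : d + 2 ≤ k) (hL : ∀ v, (L v).card = k) :
    n + m ≤ (palette L).card + ((palette L).filter (fun c => k + 1 ≤ (supp L c).card)).card := by
  classical
  set Pal := palette L with hPal
  set sb := Pal.filter (fun c => k + 1 ≤ (supp L c).card) with hsb
  have hsbP : sb ⊆ Pal := filter_subset _ _
  have hmass : (n + m) * k = ∑ c ∈ Pal, (supp L c).card := by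
    have h0 : ∀ v ∈ (univ : Finset (VV n m)), L v ⊆ Pal := by
      intro v _ c hc; exact mem_biUnion.2 ⟨v, mem_univ v, hc⟩
    have h1 := double_count L univ Pal h0
    rw [Finset.sum_congr rfl (fun v (_ : v ∈ (univ : Finset (VV n m))) => hL v), sum_const,
      smul_eq_mul] at h1
    have h2 : (univ : Finset (VV n m)).card = n + m := by simp [card_univ]
    rw [h2] at h1
    rw [h1]
    exact Finset.sum_congr rfl fun c _ => rfl
  have hbound : ∀ c ∈ Pal, (supp L c).card ≤ if c ∈ sb then n + m else k := by
    intro c hcP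
    by_cases hcs : c ∈ sb
    · simp only [hcs, if_true]
      exact card_supp_le L c
    · simp only [hcs, if_false]
      rw [hsb, mem_filter] at hcs
      by_contra hlt
      push_neg at hlt
      exact hcs ⟨hcP, by omega⟩
  have hsum2 : (n + m) * k ≤ sb.card * (n + m) + (Pal.card - sb.card) * k := by
    rw [hmass]
    calc ∑ c ∈ Pal, (supp L c).card
        ≤ ∑ c ∈ Pal, (if c ∈ sb then n + m else k) := sum_le_sum hbound
      _ = ∑ _c ∈ Pal.filter (fun c => c ∈ sb), (n + m)
          + ∑ _c ∈ Pal.filter (fun c => ¬ (c ∈ sb)), k := Finset.sum_ite _ _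
      _ = sb.card * (n + m) + (Pal.card - sb.card) * k := by
          have hfx : Pal.filter (fun c => c ∈ sb) = sb := by
            rw [filter_mem_eq_inter, Finset.inter_eq_right.2 hsbP]
          have hfc : (Pal.filter (fun c => ¬ (c ∈ sb))).card = Pal.card - sb.card := by
            rw [Finset.filter_not, hfx, card_sdiff_of_subset hsbP]
          rw [sum_const, sum_const, smul_eq_mul, smul_eq_mul, hfx, hfc]
  by_contra hco
  push_neg at hco
  set N := n + m
  set p := Pal.card; set s := sb.card
  have hsp : s ≤ p := card_le_card hsbP
  have hco' : p + s + 1 ≤ N := by omega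
  have main' : N * k + s * k ≤ s * N + p * k := by
    have hx1 : s * k ≤ p * k := Nat.mul_le_mul_right k hsp
    calc N * k + s * k ≤ (s * N + (p - s) * k) + s * k := add_le_add_left hsum2 _
      _ = s * N + ((p - s) * k + s * k) := by ring
      _ = s * N + p * k := by rw [← Nat.add_mul]; congr 2; omega
  have h3' : p * k + s * k + k ≤ N * k := by
    have := Nat.mul_le_mul_right k hco'
    calc p * k + s * k + k = (p + s + 1) * k := by ring
      _ ≤ N * k := this
  have h4' : s * N = s * k + s * d + s := by
    have : N = k + d + 1 := hNk
    rw [this]; ring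
  have hk2' : s * d + 2 * s ≤ s * k := by
    have := Nat.mul_le_mul_left s hdk
    calc s * d + 2 * s = s * (d + 2) := by ring
      _ ≤ s * k := this
  have hk1 : 1 ≤ k := by omega
  linarith

lemma phase1 (hnk : n ≤ k) (hNk : n + m = k + d + 1) (hdk : d + 2 ≤ k)
    (hL : ∀ v, (L v).card = k) : ∃ g, Good L k g := by
  classical
  set Pal := palette L with hPal
  set bigs := Pal.filter (fun c => k ≤ (supp L c).card) with hbigs
  set sbigs := Pal.filter (fun c => k + 1 ≤ (supp L c).card) with hsbigs
  set prim : Finset (ℕ × Bool) := Pal.image (fun c => (c, false)) with hprim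
  set secs : Finset (ℕ × Bool) := sbigs.image (fun c => (c, true)) with hsecs
  set slots := prim ∪ secs with hslots
  have hinj1 : Function.Injective (fun c : ℕ => (c, false)) := fun a b h => by
    simpa using h
  have hinj2 : Function.Injective (fun c : ℕ => (c, true)) := fun a b h => by
    simpa using h
  have hdisj : Disjoint prim secs := by
    rw [Finset.disjoint_left]
    rintro ⟨c, b⟩ hp hs
    rw [hprim, mem_image] at hp
    rw [hsecs, mem_image] at hs
    obtain ⟨c1, _, h1⟩ := hp
    obtain ⟨c2, _, h2⟩ := hs
    rw [← h2] at h1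
    simpa using h1
  have hslots_card : slots.card = Pal.card + sbigs.card := by
    rw [hslots, card_union_of_disjoint hdisj, card_image_of_injective _ hinj1,
      card_image_of_injective _ hinj2]
  have hNslots : n + m ≤ slots.card := by
    rw [hslots_card]; exact slots_big hNk hdk hL
  set D := slots.card - (n + m) with hD
  set tL : (VV n m ⊕ Fin D) → Finset (ℕ × Bool) := Sum.elim
    (fun v => (L v).image (fun c => (c, false)) ∪
      ((L v).filter (fun c => k + 1 ≤ (supp L c).card ∧ (v.isRight : Prop))).image
        (fun c => (c, true)))
    (fun _ => slots \ bigs.image (fun c => (c, false))) with htL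
  have htLsub : ∀ x, tL x ⊆ slots := by
    rintro (v | i) y hy
    · rw [htL] at hy
      simp only [Sum.elim_inl, mem_union] at hy
      rcases hy with hy | hy
      · rw [mem_image] at hy
        obtain ⟨c, hc, rfl⟩ := hy
        exact mem_union_left _ (mem_image.2 ⟨c, mem_biUnion.2 ⟨v, mem_univ v, hc⟩, rfl⟩)
      · rw [mem_image] at hy
        obtain ⟨c, hc, rfl⟩ := hy
        rw [mem_filter] at hc
        refine mem_union_right _ (mem_image.2 ⟨c, ?_, rfl⟩)
        exact mem_filter.2 ⟨mem_biUnion.2 ⟨v, mem_univ v, hc.1⟩, hc.2.1⟩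
    · rw [htL] at hy
      simp only [Sum.elim_inr] at hy
      exact sdiff_subset hy
  have hhall : ∀ s : Finset (VV n m ⊕ Fin D), s.card ≤ (s.biUnion tL).card := by
    intro s
    set W : Finset (VV n m) := univ.filter (fun v => Sum.inl v ∈ s) with hW
    set DW : Finset (Fin D) := univ.filter (fun i => Sum.inr i ∈ s) with hDW
    have hWmem : ∀ v ∈ W, Sum.inl v ∈ s := fun v hv => (mem_filter.1 hv).2
    have hs : s = W.image Sum.inl ∪ DW.image Sum.inr := by
      ext x
      rcases x with v | i
      · simp [hW, hDW]
      · simp [hW, hDW]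
    have hdisj2 : Disjoint (W.image Sum.inl) (DW.image Sum.inr) := by
      rw [Finset.disjoint_left]
      rintro x hx hy
      rw [mem_image] at hx hy
      obtain ⟨v, _, rfl⟩ := hx
      obtain ⟨i, _, h⟩ := hy
      simp at h
    have hcard : s.card = W.card + DW.card := by
      rw [hs, card_union_of_disjoint hdisj2, card_image_of_injective _ Sum.inl_injective,
        card_image_of_injective _ Sum.inr_injective]
    -- vertex part lower bound
    have hWsub : ∀ v ∈ W, tL (Sum.inl v) ⊆ s.biUnion tL := by
      intro v hv y hy
      exact mem_biUnion.2 ⟨Sum.inl v, hWmem v hv, hy⟩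
    rcases DW.eq_empty_or_nonempty with hDWe | ⟨i0, hi0⟩
    · -- no dummies
      rw [hcard, hDWe, card_empty, add_zero]
      set P := W.biUnion L with hPdef
      set X := P.filter
        (fun c => k + 1 ≤ (supp L c).card ∧ ∃ v ∈ W, (v.isRight : Prop) ∧ c ∈ L v) with hXdef
      have hlow : P.image (fun c => (c, false)) ∪ X.image (fun c => (c, true)) ⊆ s.biUnion tL := by
        intro y hy
        rcases mem_union.1 hy with hy | hy
        · rw [mem_image] at hy
          obtain ⟨c, hc, rfl⟩ := hy
          obtain ⟨v, hv, hcv⟩ := mem_biUnion.1 hc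
          refine hWsub v hv ?_
          rw [htL]
          exact mem_union_left _ (mem_image.2 ⟨c, hcv, rfl⟩)
        · rw [mem_image] at hy
          obtain ⟨c, hc, rfl⟩ := hy
          rw [hXdef, mem_filter] at hc
          obtain ⟨hcP, hbig, v, hv, hvr, hcv⟩ := hc
          refine hWsub v hv ?_
          rw [htL]
          exact mem_union_right _ (mem_image.2 ⟨c, mem_filter.2 ⟨hcv, hbig, hvr⟩, rfl⟩)
      have hdisj3 : Disjoint (P.image (fun c => (c, false))) (X.image (fun c => (c, true))) := by
        rw [Finset.disjoint_left]
        rintro y hy1 hy2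
        rw [mem_image] at hy1 hy2
        obtain ⟨c1, _, rfl⟩ := hy1
        obtain ⟨c2, _, h⟩ := hy2
        simpa using h
      calc W.card ≤ P.card + X.card := hall_vertex hnk hNk hdk hL W
        _ = (P.image (fun c => (c, false)) ∪ X.image (fun c => (c, true))).card := by
            rw [card_union_of_disjoint hdisj3, card_image_of_injective _ hinj1,
              card_image_of_injective _ hinj2]
        _ ≤ (s.biUnion tL).card := card_le_card hlow
    · -- with dummies
      set T := bigs.filter (fun c => ∀ v ∈ W, c ∉ L v) with hT
      have hTb : T ⊆ bigs := filter_subset _ _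
      have hTcov : T.card + W.card ≤ n + m := by
        have h1 : T.card ≤ (T.biUnion (supp L)).card := by
          refine cover_lemma (by omega) hL T fun c hc => ?_
          have := hTb hc
          rw [hbigs, mem_filter] at this
          exact this.2
        have h2 : T.biUnion (supp L) ⊆ univ \ W := by
          intro v hv
          obtain ⟨c, hc, hcv⟩ := mem_biUnion.1 hv
          rw [mem_sdiff]
          refine ⟨mem_univ v, fun hvW => ?_⟩
          rw [hT, mem_filter] at hc
          exact hc.2 v hvW (mem_supp.1 hcv)
        have h3 : (univ \ W).card = (n + m) - W.card := by
          rw [card_sdiff_of_subset (subset_univ W)]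
          congr 1
          simp [card_univ]
        have h4 : W.card ≤ n + m := by
          calc W.card ≤ (univ : Finset (VV n m)).card := card_le_card (subset_univ W)
            _ = n + m := by simp [card_univ]
        have := h1.trans ((card_le_card h2).trans_eq h3)
        omega
      have hoptsub : slots \ bigs.image (fun c => (c, false)) ⊆ s.biUnion tL := by
        intro y hy
        refine mem_biUnion.2 ⟨Sum.inr i0, (mem_filter.1 hi0).2, ?_⟩
        rw [htL]
        simpa using hy
      have hbigsub : (bigs \ T).image (fun c => (c, false)) ⊆ s.biUnion tL := by
        intro y hy
        rw [mem_image] at hy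
        obtain ⟨c, hc, rfl⟩ := hy
        rw [mem_sdiff] at hc
        have : ∃ v ∈ W, c ∈ L v := by
          by_contra hno
          push_neg at hno
          refine hc.2 ?_
          rw [hT, mem_filter]
          exact ⟨hc.1, hno⟩
        obtain ⟨v, hv, hcv⟩ := this
        refine hWsub v hv ?_
        rw [htL]
        exact mem_union_left _ (mem_image.2 ⟨c, hcv, rfl⟩)
      have hdisj4 : Disjoint (slots \ bigs.image (fun c => (c, false)))
          ((bigs \ T).image (fun c => (c, false))) := by
        rw [Finset.disjoint_left]
        rintro y hy1 hy2
        rw [mem_sdiff] at hy1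
        refine hy1.2 ?_
        rw [mem_image] at hy2 ⊢
        obtain ⟨c, hc, rfl⟩ := hy2
        exact ⟨c, (sdiff_subset hc), rfl⟩
      have hbigsl : bigs.image (fun c => (c, false)) ⊆ slots := by
        intro y hy
        rw [mem_image] at hy
        obtain ⟨c, hc, rfl⟩ := hy
        exact mem_union_left _ (mem_image.2 ⟨c, (filter_subset _ _) hc, rfl⟩)
      have hcard1 : (slots \ bigs.image (fun c => (c, false))).card
          = slots.card - bigs.card := by
        rw [card_sdiff_of_subset hbigsl, card_image_of_injective _ hinj1]
      have hcard2 : ((bigs \ T).image (fun c => (c, false))).card = bigs.card - T.card := by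
        rw [card_image_of_injective _ hinj1, card_sdiff_of_subset hTb]
      have hDWD : DW.card ≤ D := by
        calc DW.card ≤ (univ : Finset (Fin D)).card := card_le_card (subset_univ _)
          _ = D := by simp
      have hbigsc : bigs.card ≤ slots.card := by
        calc bigs.card = (bigs.image (fun c => (c, false))).card :=
              (card_image_of_injective _ hinj1).symm
          _ ≤ slots.card := card_le_card hbigsl
      have hfinal : (slots \ bigs.image (fun c => (c, false)))
          ∪ (bigs \ T).image (fun c => (c, false)) ⊆ s.biUnion tL :=
        union_subset hoptsub hbigsub
      have := card_le_card hfinal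
      rw [card_union_of_disjoint hdisj4, hcard1, hcard2] at this
      have hTbc : T.card ≤ bigs.card := card_le_card hTb
      omega
  obtain ⟨f, hfinj, hfm⟩ := (Finset.all_card_le_biUnion_card_iff_exists_injective tL).mp hhall
  have hcardeq : (univ : Finset (VV n m ⊕ Fin D)).card = slots.card := by
    rw [card_univ]
    rw [Fintype.card_sum, Fintype.card_fin]
    have : Fintype.card (VV n m) = n + m := by
      rw [Fintype.card_sum, Fintype.card_fin, Fintype.card_fin]
    rw [this, hD]
    omega
  have himg : univ.image f = slots := by
    refine Finset.eq_of_subset_of_card_le ?_ ?_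
    · intro y hy
      rw [mem_image] at hy
      obtain ⟨x, _, rfl⟩ := hy
      exact htLsub x (hfm x)
    · rw [card_image_of_injective _ hfinj, hcardeq]
  set g : VV n m → ℕ := fun v => (f (Sum.inl v)).1 with hg
  have hgmem : ∀ v b, f (Sum.inl v) = (g v, b) → True := fun _ _ _ => trivial
  have hfib2 : ∀ c, ∀ v ∈ fib g c, f (Sum.inl v) ∈ ({(c, false), (c, true)} : Finset (ℕ × Bool)) := by
    intro c v hv
    have h1 : (f (Sum.inl v)).1 = c := mem_fib.1 hv
    rcases hb : (f (Sum.inl v)).2 with _ | _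
    · have : f (Sum.inl v) = (c, false) := by
        rw [← h1, ← hb]
      rw [this]; simp
    · have : f (Sum.inl v) = (c, true) := by
        rw [← h1, ← hb]
      rw [this]; simp
  refine ⟨g, ?_, ?_, ?_, ?_⟩
  · -- V1
    intro v
    have := hfm (Sum.inl v)
    rw [htL] at this
    simp only [Sum.elim_inl, mem_union] at this
    rcases this with h | h
    · rw [mem_image] at h
      obtain ⟨c, hc, heq⟩ := h
      show (f (Sum.inl v)).1 ∈ L v
      rw [← heq]
      exact hc
    · rw [mem_image] at h
      obtain ⟨c, hc, heq⟩ := h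
      show (f (Sum.inl v)).1 ∈ L v
      rw [← heq]
      exact (mem_filter.1 hc).1
  · -- V2
    intro c
    have hpair : ({(c, false), (c, true)} : Finset (ℕ × Bool)).card = 2 := by
      rw [card_insert_of_notMem (by simp), card_singleton]
    calc (fib g c).card ≤ ({(c, false), (c, true)} : Finset (ℕ × Bool)).card := by
          refine Finset.card_le_card_of_injOn (fun v => f (Sum.inl v)) (hfib2 c) ?_
          intro v1 _ v2 _ he
          exact Sum.inl_injective (hfinj he)
      _ = 2 := hpair
  · -- V3
    intro c hc2
    have h1 : 1 < (fib g c).card := by omega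
    obtain ⟨v, hv, w, hw, hvw⟩ := Finset.one_lt_card.1 h1
    have hne : f (Sum.inl v) ≠ f (Sum.inl w) := fun he => hvw (Sum.inl_injective (hfinj he))
    have hmv := hfib2 c v hv
    have hmw := hfib2 c w hw
    simp only [mem_insert, mem_singleton] at hmv hmw
    have : f (Sum.inl v) = (c, true) ∨ f (Sum.inl w) = (c, true) := by
      rcases hmv with h | h
      · rcases hmw with h' | h'
        · exact absurd (h.trans h'.symm) hne
        · exact Or.inr h'
      · exact Or.inl h
    obtain ⟨u, hu⟩ : ∃ u, f (Sum.inl u) = (c, true) := by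
      rcases this with h | h
      · exact ⟨v, h⟩
      · exact ⟨w, h⟩
    have := hfm (Sum.inl u)
    rw [htL, hu] at this
    simp only [Sum.elim_inl, mem_union] at this
    rcases this with h | h
    · rw [mem_image] at h
      obtain ⟨c', _, heq⟩ := h
      simpa using heq
    · rw [mem_image] at h
      obtain ⟨c', hc', heq⟩ := h
      have : c' = c := by simpa using heq
      rw [this] at hc'
      exact (mem_filter.1 hc').2.1
  · -- V4
    intro c hck
    have hsne : (supp L c).Nonempty := by
      rw [← card_pos]
      omega
    obtain ⟨v0, hv0⟩ := hsne
    have hcPal : c ∈ Pal := mem_biUnion.2 ⟨v0, mem_univ v0, mem_supp.1 hv0⟩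
    have hcbigs : c ∈ bigs := mem_filter.2 ⟨hcPal, hck⟩
    have hslot : (c, false) ∈ slots :=
      mem_union_left _ (mem_image.2 ⟨c, hcPal, rfl⟩)
    rw [← himg, mem_image] at hslot
    obtain ⟨x, _, hfx⟩ := hslot
    rcases x with v | i
    · refine card_pos.2 ⟨v, mem_fib.2 ?_⟩
      show (f (Sum.inl v)).1 = c
      rw [hfx]
    · exfalso
      have := hfm (Sum.inr i)
      rw [htL, hfx] at this
      simp only [Sum.elim_inr, mem_sdiff] at this
      exact this.2 (mem_image.2 ⟨c, hcbigs, rfl⟩)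

end Phase1

section MoveTools
variable {L : VV n m → Finset ℕ} {k : ℕ}

lemma fib_update (g : VV n m → ℕ) (v : VV n m) (χ ψ : ℕ) :
    fib (Function.update g v χ) ψ =
      if ψ = χ then insert v ((fib g ψ).erase v) else (fib g ψ).erase v := by
  classical
  ext w
  rcases eq_or_ne w v with rfl | hw
  · by_cases hψ : ψ = χ
    · simp [hψ, Function.update_self]
    · simp [Function.update_self, hψ, Ne.symm hψ]
  · by_cases hψ : ψ = χ <;>
      simp [Function.update_of_ne hw, hψ, hw]

lemma erase_eq_self_of_fib {g : VV n m → ℕ} {ψ : ℕ} {v : VV n m} (h : g v ≠ ψ) :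
    (fib g ψ).erase v = fib g ψ :=
  erase_eq_of_notMem (fun hv => h (mem_fib.1 hv))

/-- A set contained in one side is not mixed. -/
lemma not_mixed_of_subset_AS {s : Finset (VV n m)} (h : s ⊆ AS n m) :
    ¬(((s ∩ AS n m).Nonempty) ∧ ((s ∩ BS n m).Nonempty)) := by
  rintro ⟨-, v, hv⟩
  rw [mem_inter] at hv
  have h1 := h hv.1
  rw [AS, mem_filter] at h1
  rw [BS, mem_filter] at hv
  rcases v with w | w
  · simp at hv
  · simp at h1

lemma not_mixed_of_subset_BS {s : Finset (VV n m)} (h : s ⊆ BS n m) :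
    ¬(((s ∩ AS n m).Nonempty) ∧ ((s ∩ BS n m).Nonempty)) := by
  rintro ⟨⟨v, hv⟩, -⟩
  rw [mem_inter] at hv
  have h1 := h hv.1
  rw [BS, mem_filter] at h1
  rw [AS, mem_filter] at hv
  rcases v with w | w
  · simp at h1
  · simp at hv

end MoveTools

lemma singleton_side (v : VV n m) :
    ({v} : Finset (VV n m)) ⊆ AS n m ∨ ({v} : Finset (VV n m)) ⊆ BS n m := by
  rcases v with w | w
  · left; intro x hx; rw [mem_singleton] at hx; subst hx; simp [AS]
  · right; intro x hx; rw [mem_singleton] at hx; subst hx; simp [BS]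

lemma not_mixed_of_card_le_one {s : Finset (VV n m)} (h : s.card ≤ 1) :
    ¬((s ∩ AS n m).Nonempty ∧ (s ∩ BS n m).Nonempty) := by
  rcases s.eq_empty_or_nonempty with rfl | ⟨v, hv⟩
  · rintro ⟨⟨x, hx⟩, -⟩; simp at hx
  · have hs : s ⊆ {v} := by
      intro w hw
      rw [mem_singleton]
      exact Finset.card_le_one.1 h w hw v hv
    rcases singleton_side v with h1 | h1
    · exact not_mixed_of_subset_AS (hs.trans h1)
    · exact not_mixed_of_subset_BS (hs.trans h1)

section Moves
variable {L : VV n m → Finset ℕ} {k : ℕ}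

/-- Generic one-point move: recolor an endpoint `u` of the mixed pair `{a0, b0}` of color `c`
to a color `χ` whose new fiber stays small and one-sided. -/
lemma move_one {g : VV n m → ℕ} (hg : Good L k g) {c χ : ℕ} {a0 b0 u : VV n m}
    (hfc : fib g c = {a0, b0}) (hu : u = a0 ∨ u = b0) (hab : a0 ≠ b0)
    (hχL : χ ∈ L u) (hχc : χ ≠ c)
    (hcard : (fib g χ).card ≤ 1)
    (hsb : (fib g χ).card = 1 → k + 1 ≤ (supp L χ).card)
    (hside : insert u (fib g χ) ⊆ AS n m ∨ insert u (fib g χ) ⊆ BS n m) :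
    ∃ g', Good L k g' ∧ MixedSet g' ⊆ (MixedSet g).erase c := by
  classical
  obtain ⟨hg1, hg2, hg3, hg4⟩ := hg
  set g' := Function.update g u χ with hg'def
  have hgu : g u = c := by
    have : u ∈ fib g c := by
      rw [hfc]; rcases hu with rfl | rfl
      · exact mem_insert_self _ _
      · exact mem_insert_of_mem (mem_singleton_self _)
    exact mem_fib.1 this
  have hufib : u ∉ fib g χ := fun h => hχc ((mem_fib.1 h).symm.trans hgu)
  have hf1 : fib g' χ = insert u (fib g χ) := by
    rw [hg'def, fib_update, if_pos rfl, erase_eq_of_notMem hufib]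
  have hfc' : fib g' c = (fib g c).erase u := by
    rw [hg'def, fib_update, if_neg (Ne.symm hχc)]
  have hfψ : ∀ ψ, ψ ≠ χ → ψ ≠ c → fib g' ψ = fib g ψ := by
    intro ψ h1 h2
    rw [hg'def, fib_update, if_neg h1]
    exact erase_eq_self_of_fib (by rw [hgu]; exact fun he => h2 he.symm)
  have hcardc' : (fib g' c).card = 1 := by
    rw [hfc', hfc]
    rcases hu with rfl | rfl
    · rw [Finset.erase_insert (by simp [hab])]
      exact card_singleton _
    · rw [Finset.pair_comm, Finset.erase_insert (by simp [Ne.symm hab])]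
      exact card_singleton _
  have hcardχ' : (fib g' χ).card = (fib g χ).card + 1 := by
    rw [hf1, card_insert_of_notMem hufib]
  refine ⟨g', ⟨?_, ?_, ?_, ?_⟩, ?_⟩
  · intro v
    rcases eq_or_ne v u with rfl | hv
    · rw [hg'def, Function.update_self]; exact hχL
    · rw [hg'def, Function.update_of_ne hv]; exact hg1 v
  · intro ψ
    rcases eq_or_ne ψ χ with rfl | h1
    · omega
    rcases eq_or_ne ψ c with rfl | h2
    · omega
    · rw [hfψ ψ h1 h2]; exact hg2 ψ
  · intro ψ h2c
    rcases eq_or_ne ψ χ with rfl | h1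
    · exact hsb (by omega)
    rcases eq_or_ne ψ c with rfl | h2
    · omega
    · rw [hfψ ψ h1 h2] at h2c; exact hg3 ψ h2c
  · intro ψ hψ
    rcases eq_or_ne ψ χ with rfl | h1
    · omega
    rcases eq_or_ne ψ c with rfl | h2
    · omega
    · rw [hfψ ψ h1 h2]; exact hg4 ψ hψ
  · intro ψ hψ
    rw [mem_mixedSet] at hψ
    rcases eq_or_ne ψ χ with rfl | h1
    · exfalso
      rw [hf1] at hψ
      rcases hside with h | h
      · exact not_mixed_of_subset_AS h hψ
      · exact not_mixed_of_subset_BS h hψ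
    rcases eq_or_ne ψ c with rfl | h2
    · exact absurd hψ (not_mixed_of_card_le_one (by omega))
    · rw [mem_erase]
      refine ⟨h2, ?_⟩
      rw [mem_mixedSet, ← hfψ ψ h1 h2]
      exact hψ

/-- Generic two-point move: vertex `u` (outside the mixed pair) is recolored to `α`,
and the endpoint `w` of the mixed pair takes over `u`'s old color `β = g u`. -/
lemma move_two {g : VV n m → ℕ} (hg : Good L k g) {c α : ℕ} {a0 b0 u w : VV n m}
    (hfc : fib g c = {a0, b0}) (hw : w = a0 ∨ w = b0) (hab : a0 ≠ b0)
    (hu : u ∉ ({a0, b0} : Finset (VV n m)))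
    (hαL : α ∈ L u) (hβL : g u ∈ L w) (hαβ : α ≠ g u)
    (hsideβ : insert w ((fib g (g u)).erase u) ⊆ AS n m ∨
      insert w ((fib g (g u)).erase u) ⊆ BS n m)
    (hαcase : (α = c ∧ (insert u (({a0, b0} : Finset (VV n m)).erase w) ⊆ AS n m ∨
        insert u (({a0, b0} : Finset (VV n m)).erase w) ⊆ BS n m))
      ∨ (fib g α = ∅ ∧ α ≠ c)) :
    ∃ g', Good L k g' ∧ MixedSet g' ⊆ (MixedSet g).erase c := by
  classical
  obtain ⟨hg1, hg2, hg3, hg4⟩ := hg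
  have hgw : g w = c := by
    have : w ∈ fib g c := by
      rw [hfc]; rcases hw with rfl | rfl
      · exact mem_insert_self _ _
      · exact mem_insert_of_mem (mem_singleton_self _)
    exact mem_fib.1 this
  have hβc : g u ≠ c := by
    intro h
    exact hu (by rw [← hfc]; exact mem_fib.2 h)
  have huw : u ≠ w := by
    rintro rfl
    exact hβc hgw
  have hwβ : w ∉ fib g (g u) := fun h => hβc ((mem_fib.1 h).symm.trans hgw)
  set g1 := Function.update g u α with hg1def
  set g' := Function.update g1 w (g u) with hg'def
  have hfβ' : fib g' (g u) = insert w ((fib g (g u)).erase u) := by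
    rw [hg'def, fib_update, if_pos rfl, hg1def, fib_update, if_neg (Ne.symm hαβ)]
    congr 1
    apply erase_eq_of_notMem
    intro hwm
    exact hwβ (mem_of_mem_erase hwm)
  have huβ : u ∈ fib g (g u) := self_mem_fib g u
  have hwer : w ∉ (fib g (g u)).erase u := fun h => hwβ (mem_of_mem_erase h)
  have hcardβ : (fib g' (g u)).card = (fib g (g u)).card := by
    rw [hfβ', card_insert_of_notMem hwer, card_erase_of_mem huβ]
    have : 1 ≤ (fib g (g u)).card := card_pos.2 ⟨u, huβ⟩
    omega
  have hfψ : ∀ ψ, ψ ≠ α → ψ ≠ g u → ψ ≠ c → fib g' ψ = fib g ψ := by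
    intro ψ h1 h2 h3
    rw [hg'def, fib_update, if_neg h2, hg1def, fib_update, if_neg h1,
      erase_eq_self_of_fib (show g u ≠ ψ from fun he => h2 he.symm),
      erase_eq_self_of_fib (show g w ≠ ψ from fun he => h3 (he.symm.trans hgw))]
  have hwnm : w ∈ ({a0, b0} : Finset (VV n m)) := by
    rcases hw with rfl | rfl
    · exact mem_insert_self _ _
    · exact mem_insert_of_mem (mem_singleton_self _)
  have hcard_er : (({a0, b0} : Finset (VV n m)).erase w).card = 1 := by
    rw [card_erase_of_mem hwnm, card_pair hab]
  have hcg : (fib g c).card = 2 := by rw [hfc]; exact card_pair hab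
  rcases hαcase with ⟨hac, hsideα⟩ | ⟨hαe, hαc⟩
  · -- B1 : α = c, the fiber of c becomes {u, other endpoint}
    subst hac
    have hfc' : fib g' α = insert u (({a0, b0} : Finset (VV n m)).erase w) := by
      rw [hg'def, fib_update, if_neg hαβ, hg1def, fib_update, if_pos rfl,
        erase_eq_of_notMem (fun h => hu (hfc ▸ h)), hfc,
        Finset.erase_insert_of_ne huw]
    have hcardc' : (fib g' α).card = 2 := by
      rw [hfc', card_insert_of_notMem (fun h => hu (mem_of_mem_erase h)), hcard_er]
    refine ⟨g', ⟨?_, ?_, ?_, ?_⟩, ?_⟩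
    · intro v
      rcases eq_or_ne v w with rfl | hvw
      · rw [hg'def, Function.update_self]; exact hβL
      rcases eq_or_ne v u with rfl | hvu
      · rw [hg'def, Function.update_of_ne huw, hg1def, Function.update_self]; exact hαL
      · rw [hg'def, Function.update_of_ne hvw, hg1def, Function.update_of_ne hvu]; exact hg1 v
    · intro ψ
      rcases eq_or_ne ψ (g u) with rfl | h2
      · rw [hcardβ]; exact hg2 _
      rcases eq_or_ne ψ α with rfl | h1
      · omega
      · rw [hfψ ψ h1 h2 h1]; exact hg2 ψ
    · intro ψ hc2
      rcases eq_or_ne ψ (g u) with rfl | h2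
      · rw [hcardβ] at hc2; exact hg3 _ hc2
      rcases eq_or_ne ψ α with rfl | h1
      · exact hg3 _ hcg
      · rw [hfψ ψ h1 h2 h1] at hc2; exact hg3 ψ hc2
    · intro ψ hψ
      rcases eq_or_ne ψ (g u) with rfl | h2
      · rw [hcardβ]; exact hg4 _ hψ
      rcases eq_or_ne ψ α with rfl | h1
      · omega
      · rw [hfψ ψ h1 h2 h1]; exact hg4 ψ hψ
    · intro ψ hψ
      rw [mem_mixedSet] at hψ
      rcases eq_or_ne ψ (g u) with rfl | h2
      · exfalso
        rw [hfβ'] at hψ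
        rcases hsideβ with h | h
        · exact not_mixed_of_subset_AS h hψ
        · exact not_mixed_of_subset_BS h hψ
      rcases eq_or_ne ψ α with rfl | h1
      · exfalso
        rw [hfc'] at hψ
        rcases hsideα with h | h
        · exact not_mixed_of_subset_AS h hψ
        · exact not_mixed_of_subset_BS h hψ
      · rw [mem_erase]
        refine ⟨h1, ?_⟩
        rw [mem_mixedSet, ← hfψ ψ h1 h2 h1]
        exact hψ
  · -- B2 : α is an unused color
    have hfα' : fib g' α = {u} := by
      rw [hg'def, fib_update, if_neg hαβ, hg1def, fib_update, if_pos rfl, hαe]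
      rw [erase_empty, LawfulSingleton.insert_empty_eq]
      exact erase_eq_of_notMem (by simp [Ne.symm huw])
    have hfc2' : fib g' c = ({a0, b0} : Finset (VV n m)).erase w := by
      rw [hg'def, fib_update, if_neg (fun h => hβc h.symm), hg1def, fib_update,
        if_neg (fun h => hαc h.symm), erase_eq_of_notMem (fun h => hu (hfc ▸ h)), hfc]
    have hcardc2 : (fib g' c).card = 1 := by rw [hfc2', hcard_er]
    have hcardα : (fib g' α).card = 1 := by rw [hfα']; exact card_singleton _
    refine ⟨g', ⟨?_, ?_, ?_, ?_⟩, ?_⟩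
    · intro v
      rcases eq_or_ne v w with rfl | hvw
      · rw [hg'def, Function.update_self]; exact hβL
      rcases eq_or_ne v u with rfl | hvu
      · rw [hg'def, Function.update_of_ne huw, hg1def, Function.update_self]; exact hαL
      · rw [hg'def, Function.update_of_ne hvw, hg1def, Function.update_of_ne hvu]; exact hg1 v
    · intro ψ
      rcases eq_or_ne ψ (g u) with rfl | h2
      · rw [hcardβ]; exact hg2 _
      rcases eq_or_ne ψ α with rfl | h1
      · omega
      rcases eq_or_ne ψ c with rfl | h3
      · omega
      · rw [hfψ ψ h1 h2 h3]; exact hg2 ψ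
    · intro ψ hc2
      rcases eq_or_ne ψ (g u) with rfl | h2
      · rw [hcardβ] at hc2; exact hg3 _ hc2
      rcases eq_or_ne ψ α with rfl | h1
      · omega
      rcases eq_or_ne ψ c with rfl | h3
      · omega
      · rw [hfψ ψ h1 h2 h3] at hc2; exact hg3 ψ hc2
    · intro ψ hψ
      rcases eq_or_ne ψ (g u) with rfl | h2
      · rw [hcardβ]; exact hg4 _ hψ
      rcases eq_or_ne ψ α with rfl | h1
      · omega
      rcases eq_or_ne ψ c with rfl | h3
      · omega
      · rw [hfψ ψ h1 h2 h3]; exact hg4 ψ hψ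
    · intro ψ hψ
      rw [mem_mixedSet] at hψ
      rcases eq_or_ne ψ (g u) with rfl | h2
      · exfalso
        rw [hfβ'] at hψ
        rcases hsideβ with h | h
        · exact not_mixed_of_subset_AS h hψ
        · exact not_mixed_of_subset_BS h hψ
      rcases eq_or_ne ψ α with rfl | h1
      · exact absurd hψ (not_mixed_of_card_le_one (by omega))
      rcases eq_or_ne ψ c with rfl | h3
      · exact absurd hψ (not_mixed_of_card_le_one (by omega))
      · rw [mem_erase]
        refine ⟨h3, ?_⟩
        rw [mem_mixedSet, ← hfψ ψ h1 h2 h3]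
        exact hψ

end Moves

section Counts
variable {L : VV n m → Finset ℕ} {k : ℕ}

lemma side_total (v : VV n m) : v ∈ AS n m ∨ v ∈ BS n m := by
  rcases v with w | w
  · left; simp [AS]
  · right; simp [BS]

lemma side_not_both {v : VV n m} (h1 : v ∈ AS n m) (h2 : v ∈ BS n m) : False := by
  rcases v with w | w
  · simp [BS] at h2
  · simp [AS] at h1

lemma sub_iff_inter_card {s t : Finset (VV n m)} :
    s ⊆ t ↔ (s ∩ t).card = s.card := by
  constructor
  · intro h; rw [Finset.inter_eq_left.2 h]
  · intro h
    have : s ∩ t = s := Finset.eq_of_subset_of_card_le inter_subset_left (le_of_eq h.symm)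
    rw [← this]; exact inter_subset_right

lemma wA_eq (g : VV n m → ℕ) (χ : ℕ) (hused : χ ∈ univ.image g)
    (h2 : (fib g χ).card ≤ 2) :
    (fib g χ ∩ AS n m).card =
      (if (fib g χ).card = 1 ∧ fib g χ ⊆ AS n m then 1 else 0)
      + 2 * (if (fib g χ).card = 2 ∧ fib g χ ⊆ AS n m then 1 else 0)
      + (if χ ∈ MixedSet g then 1 else 0) := by
  classical
  have hc1 : 1 ≤ (fib g χ).card := card_pos.2 (fib_nonempty_iff.2 hused)
  have hAB := card_inter_AS_BS (fib g χ)
  have hmix_iff : χ ∈ MixedSet g ↔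
      1 ≤ (fib g χ ∩ AS n m).card ∧ 1 ≤ (fib g χ ∩ BS n m).card := by
    rw [mem_mixedSet]
    constructor
    · rintro ⟨h1, h2⟩; exact ⟨card_pos.2 h1, card_pos.2 h2⟩
    · rintro ⟨h1, h2⟩; exact ⟨card_pos.1 h1, card_pos.1 h2⟩
  have hBzero : fib g χ ⊆ AS n m → (fib g χ ∩ BS n m).card = 0 := by
    intro h
    rw [card_eq_zero]
    ext v
    simp only [mem_inter, notMem_empty, iff_false, not_and]
    intro h1 hB
    exact side_not_both (h h1) hB
  have hnotsubA : ¬ (fib g χ ⊆ AS n m) → 1 ≤ (fib g χ ∩ BS n m).card := by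
    intro h
    obtain ⟨v, hv1, hv2⟩ := Finset.not_subset.1 h
    refine card_pos.2 ⟨v, mem_inter.2 ⟨hv1, ?_⟩⟩
    rcases side_total v with hs | hs
    · exact absurd hs hv2
    · exact hs
  have hnotsubB : ¬ (fib g χ ⊆ BS n m) → 1 ≤ (fib g χ ∩ AS n m).card := by
    intro h
    obtain ⟨v, hv1, hv2⟩ := Finset.not_subset.1 h
    refine card_pos.2 ⟨v, mem_inter.2 ⟨hv1, ?_⟩⟩
    rcases side_total v with hs | hs
    · exact hs
    · exact absurd hs hv2
  by_cases hA : fib g χ ⊆ AS n m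
  · have hAm : (fib g χ ∩ AS n m).card = (fib g χ).card := sub_iff_inter_card.1 hA
    have hnm : χ ∉ MixedSet g := by
      rw [hmix_iff]
      rintro ⟨-, hB⟩
      have := hBzero hA
      omega
    rcases (by omega : (fib g χ).card = 1 ∨ (fib g χ).card = 2) with h | h <;>
      simp [h, hA, hnm, hAm]
  · by_cases hB : fib g χ ⊆ BS n m
    · have hBm : (fib g χ ∩ BS n m).card = (fib g χ).card := sub_iff_inter_card.1 hB
      have hAm : (fib g χ ∩ AS n m).card = 0 := by omega
      have hnm : χ ∉ MixedSet g := by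
        rw [hmix_iff]
        rintro ⟨h1, -⟩
        omega
      simp [hA, hnm, hAm]
    · have h1 := hnotsubA hA
      have h2 := hnotsubB hB
      have hm : χ ∈ MixedSet g := hmix_iff.2 ⟨h2, h1⟩
      have hAm : (fib g χ ∩ AS n m).card = 1 := by omega
      simp [hA, hm, hAm, (by omega : ¬ ((fib g χ).card = 1 ∧ False)), hm]

lemma wB_eq (g : VV n m → ℕ) (χ : ℕ) (hused : χ ∈ univ.image g)
    (h2 : (fib g χ).card ≤ 2) :
    (fib g χ ∩ BS n m).card =
      (if (fib g χ).card = 1 ∧ fib g χ ⊆ BS n m then 1 else 0)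
      + 2 * (if (fib g χ).card = 2 ∧ fib g χ ⊆ BS n m then 1 else 0)
      + (if χ ∈ MixedSet g then 1 else 0) := by
  classical
  have hc1 : 1 ≤ (fib g χ).card := card_pos.2 (fib_nonempty_iff.2 hused)
  have hAB := card_inter_AS_BS (fib g χ)
  have hmix_iff : χ ∈ MixedSet g ↔
      1 ≤ (fib g χ ∩ AS n m).card ∧ 1 ≤ (fib g χ ∩ BS n m).card := by
    rw [mem_mixedSet]
    constructor
    · rintro ⟨h1, h2⟩; exact ⟨card_pos.2 h1, card_pos.2 h2⟩
    · rintro ⟨h1, h2⟩; exact ⟨card_pos.1 h1, card_pos.1 h2⟩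
  have hAzero : fib g χ ⊆ BS n m → (fib g χ ∩ AS n m).card = 0 := by
    intro h
    rw [card_eq_zero]
    ext v
    simp only [mem_inter, notMem_empty, iff_false, not_and]
    intro h1 hA
    exact side_not_both hA (h h1)
  have hnotsubA : ¬ (fib g χ ⊆ AS n m) → 1 ≤ (fib g χ ∩ BS n m).card := by
    intro h
    obtain ⟨v, hv1, hv2⟩ := Finset.not_subset.1 h
    refine card_pos.2 ⟨v, mem_inter.2 ⟨hv1, ?_⟩⟩
    rcases side_total v with hs | hs
    · exact absurd hs hv2
    · exact hs
  have hnotsubB : ¬ (fib g χ ⊆ BS n m) → 1 ≤ (fib g χ ∩ AS n m).card := by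
    intro h
    obtain ⟨v, hv1, hv2⟩ := Finset.not_subset.1 h
    refine card_pos.2 ⟨v, mem_inter.2 ⟨hv1, ?_⟩⟩
    rcases side_total v with hs | hs
    · exact hs
    · exact absurd hs hv2
  by_cases hB : fib g χ ⊆ BS n m
  · have hBm : (fib g χ ∩ BS n m).card = (fib g χ).card := sub_iff_inter_card.1 hB
    have hnm : χ ∉ MixedSet g := by
      rw [hmix_iff]
      rintro ⟨hA1, -⟩
      have := hAzero hB
      omega
    rcases (by omega : (fib g χ).card = 1 ∨ (fib g χ).card = 2) with h | h <;>
      simp [h, hB, hnm, hBm]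
  · by_cases hA : fib g χ ⊆ AS n m
    · have hAm : (fib g χ ∩ AS n m).card = (fib g χ).card := sub_iff_inter_card.1 hA
      have hBm : (fib g χ ∩ BS n m).card = 0 := by omega
      have hnm : χ ∉ MixedSet g := by
        rw [hmix_iff]
        rintro ⟨-, h1⟩
        omega
      simp [hB, hnm, hBm]
    · have h1 := hnotsubA hA
      have h2 := hnotsubB hB
      have hm : χ ∈ MixedSet g := hmix_iff.2 ⟨h2, h1⟩
      have hBm : (fib g χ ∩ BS n m).card = 1 := by omega
      simp [hB, hm, hBm]

lemma count_A (g : VV n m → ℕ) (hg2 : ∀ c, (fib g c).card ≤ 2) :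
    n = ((univ.image g).filter (fun χ => (fib g χ).card = 1 ∧ fib g χ ⊆ AS n m)).card
      + 2 * ((univ.image g).filter (fun χ => (fib g χ).card = 2 ∧ fib g χ ⊆ AS n m)).card
      + (MixedSet g).card := by
  classical
  have h1 : (AS n m).card = ∑ χ ∈ univ.image g, ((AS n m).filter (fun v => g v = χ)).card :=
    card_eq_sum_card_fiberwise (fun v _ => mem_image.2 ⟨v, mem_univ v, rfl⟩)
  have h0 : (AS n m).card = ∑ χ ∈ univ.image g, (fib g χ ∩ AS n m).card := by
    rw [h1]
    refine Finset.sum_congr rfl fun χ _ => ?_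
    congr 1
    ext v
    simp [fib, mem_filter, and_comm]
  have e1 : ∑ χ ∈ univ.image g, (if (fib g χ).card = 1 ∧ fib g χ ⊆ AS n m then 1 else 0)
      = ((univ.image g).filter (fun χ => (fib g χ).card = 1 ∧ fib g χ ⊆ AS n m)).card :=
    (Finset.card_filter _ _).symm
  have e2 : ∑ χ ∈ univ.image g, (if (fib g χ).card = 2 ∧ fib g χ ⊆ AS n m then 1 else 0)
      = ((univ.image g).filter (fun χ => (fib g χ).card = 2 ∧ fib g χ ⊆ AS n m)).card :=
    (Finset.card_filter _ _).symm
  have e3 : ∑ χ ∈ univ.image g, (if χ ∈ MixedSet g then 1 else 0) = (MixedSet g).card := by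
    rw [(Finset.card_filter _ _).symm, filter_mem_eq_inter,
      Finset.inter_eq_right.2 (show MixedSet g ⊆ univ.image g from filter_subset _ _)]
  calc n = (AS n m).card := card_AS.symm
    _ = ∑ χ ∈ univ.image g, (fib g χ ∩ AS n m).card := h0
    _ = ∑ χ ∈ univ.image g,
        ((if (fib g χ).card = 1 ∧ fib g χ ⊆ AS n m then 1 else 0)
          + 2 * (if (fib g χ).card = 2 ∧ fib g χ ⊆ AS n m then 1 else 0)
          + (if χ ∈ MixedSet g then 1 else 0)) :=
      Finset.sum_congr rfl (fun χ hχ => wA_eq g χ hχ (hg2 χ))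
    _ = _ := by
      rw [Finset.sum_add_distrib, Finset.sum_add_distrib, ← Finset.mul_sum, e1, e2, e3]

lemma count_B (g : VV n m → ℕ) (hg2 : ∀ c, (fib g c).card ≤ 2) :
    m = ((univ.image g).filter (fun χ => (fib g χ).card = 1 ∧ fib g χ ⊆ BS n m)).card
      + 2 * ((univ.image g).filter (fun χ => (fib g χ).card = 2 ∧ fib g χ ⊆ BS n m)).card
      + (MixedSet g).card := by
  classical
  have h1 : (BS n m).card = ∑ χ ∈ univ.image g, ((BS n m).filter (fun v => g v = χ)).card :=
    card_eq_sum_card_fiberwise (fun v _ => mem_image.2 ⟨v, mem_univ v, rfl⟩)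
  have h0 : (BS n m).card = ∑ χ ∈ univ.image g, (fib g χ ∩ BS n m).card := by
    rw [h1]
    refine Finset.sum_congr rfl fun χ _ => ?_
    congr 1
    ext v
    simp [fib, mem_filter, and_comm]
  have e1 : ∑ χ ∈ univ.image g, (if (fib g χ).card = 1 ∧ fib g χ ⊆ BS n m then 1 else 0)
      = ((univ.image g).filter (fun χ => (fib g χ).card = 1 ∧ fib g χ ⊆ BS n m)).card :=
    (Finset.card_filter _ _).symm
  have e2 : ∑ χ ∈ univ.image g, (if (fib g χ).card = 2 ∧ fib g χ ⊆ BS n m then 1 else 0)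
      = ((univ.image g).filter (fun χ => (fib g χ).card = 2 ∧ fib g χ ⊆ BS n m)).card :=
    (Finset.card_filter _ _).symm
  have e3 : ∑ χ ∈ univ.image g, (if χ ∈ MixedSet g then 1 else 0) = (MixedSet g).card := by
    rw [(Finset.card_filter _ _).symm, filter_mem_eq_inter,
      Finset.inter_eq_right.2 (show MixedSet g ⊆ univ.image g from filter_subset _ _)]
  calc m = (BS n m).card := card_BS.symm
    _ = ∑ χ ∈ univ.image g, (fib g χ ∩ BS n m).card := h0
    _ = ∑ χ ∈ univ.image g,
        ((if (fib g χ).card = 1 ∧ fib g χ ⊆ BS n m then 1 else 0)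
          + 2 * (if (fib g χ).card = 2 ∧ fib g χ ⊆ BS n m then 1 else 0)
          + (if χ ∈ MixedSet g then 1 else 0)) :=
      Finset.sum_congr rfl (fun χ hχ => wB_eq g χ hχ (hg2 χ))
    _ = _ := by
      rw [Finset.sum_add_distrib, Finset.sum_add_distrib, ← Finset.mul_sum, e1, e2, e3]

end Counts

section Counts2
variable {L : VV n m → Finset ℕ} {k : ℕ}

lemma mem_cat (g : VV n m → ℕ) (χ : ℕ) (hg2 : (fib g χ).card ≤ 2)
    (hused : χ ∈ univ.image g) :
    ((fib g χ).card = 1 ∧ fib g χ ⊆ AS n m) ∨ ((fib g χ).card = 1 ∧ fib g χ ⊆ BS n m)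
    ∨ ((fib g χ).card = 2 ∧ fib g χ ⊆ AS n m) ∨ ((fib g χ).card = 2 ∧ fib g χ ⊆ BS n m)
    ∨ χ ∈ MixedSet g := by
  classical
  have hc1 : 1 ≤ (fib g χ).card := card_pos.2 (fib_nonempty_iff.2 hused)
  by_cases hA : fib g χ ⊆ AS n m
  · rcases (by omega : (fib g χ).card = 1 ∨ (fib g χ).card = 2) with h | h
    · exact Or.inl ⟨h, hA⟩
    · exact Or.inr (Or.inr (Or.inl ⟨h, hA⟩))
  · by_cases hB : fib g χ ⊆ BS n m
    · rcases (by omega : (fib g χ).card = 1 ∨ (fib g χ).card = 2) with h | h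
      · exact Or.inr (Or.inl ⟨h, hB⟩)
      · exact Or.inr (Or.inr (Or.inr (Or.inl ⟨h, hB⟩)))
    · refine Or.inr (Or.inr (Or.inr (Or.inr ?_)))
      rw [mem_mixedSet]
      constructor
      · obtain ⟨v, hv1, hv2⟩ := Finset.not_subset.1 hB
        refine ⟨v, mem_inter.2 ⟨hv1, ?_⟩⟩
        rcases side_total v with hs | hs
        · exact hs
        · exact absurd hs hv2
      · obtain ⟨v, hv1, hv2⟩ := Finset.not_subset.1 hA
        refine ⟨v, mem_inter.2 ⟨hv1, ?_⟩⟩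
        rcases side_total v with hs | hs
        · exact absurd hs hv2
        · exact hs

lemma cat_ind (g : VV n m → ℕ) (χ : ℕ) (hused : χ ∈ univ.image g)
    (h2 : (fib g χ).card ≤ 2) :
    (1 : ℕ) = (if (fib g χ).card = 1 ∧ fib g χ ⊆ AS n m then 1 else 0)
      + (if (fib g χ).card = 1 ∧ fib g χ ⊆ BS n m then 1 else 0)
      + (if (fib g χ).card = 2 ∧ fib g χ ⊆ AS n m then 1 else 0)
      + (if (fib g χ).card = 2 ∧ fib g χ ⊆ BS n m then 1 else 0)
      + (if χ ∈ MixedSet g then 1 else 0) := by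
  classical
  have h2' := h2
  have hc1 : 1 ≤ (fib g χ).card := card_pos.2 (fib_nonempty_iff.2 hused)
  by_cases hA : fib g χ ⊆ AS n m
  · have hnB : ¬ fib g χ ⊆ BS n m := by
      intro hB
      obtain ⟨v, hv⟩ := fib_nonempty_iff.2 hused
      exact side_not_both (hA hv) (hB hv)
    have hnm : χ ∉ MixedSet g := by
      rw [mem_mixedSet]
      rintro ⟨-, ⟨v, hv⟩⟩
      rw [mem_inter] at hv
      exact side_not_both (hA hv.1) hv.2
    rcases (by omega : (fib g χ).card = 1 ∨ (fib g χ).card = 2) with h | h <;>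
      simp [h, hA, hnB, hnm]
  · by_cases hB : fib g χ ⊆ BS n m
    · have hnm : χ ∉ MixedSet g := by
        rw [mem_mixedSet]
        rintro ⟨⟨v, hv⟩, -⟩
        rw [mem_inter] at hv
        exact side_not_both hv.2 (hB hv.1)
      rcases (by omega : (fib g χ).card = 1 ∨ (fib g χ).card = 2) with h | h <;>
        simp [h, hA, hB, hnm]
    · have hm : χ ∈ MixedSet g := by
        rcases mem_cat g χ h2' hused with h | h | h | h | h
        · exact absurd h.2 hA
        · exact absurd h.2 hB
        · exact absurd h.2 hA
        · exact absurd h.2 hB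
        · exact h
      simp [hA, hB, hm]

lemma count_used (g : VV n m → ℕ) (hg2 : ∀ c, (fib g c).card ≤ 2) :
    (univ.image g).card
      = ((univ.image g).filter (fun χ => (fib g χ).card = 1 ∧ fib g χ ⊆ AS n m)).card
      + ((univ.image g).filter (fun χ => (fib g χ).card = 1 ∧ fib g χ ⊆ BS n m)).card
      + ((univ.image g).filter (fun χ => (fib g χ).card = 2 ∧ fib g χ ⊆ AS n m)).card
      + ((univ.image g).filter (fun χ => (fib g χ).card = 2 ∧ fib g χ ⊆ BS n m)).card
      + (MixedSet g).card := by
  classical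
  have e0 : (univ.image g).card = ∑ χ ∈ univ.image g, (1 : ℕ) := by
    rw [Finset.sum_const, smul_eq_mul, mul_one]
  have e5 : ∑ χ ∈ univ.image g, (if χ ∈ MixedSet g then 1 else 0) = (MixedSet g).card := by
    rw [(Finset.card_filter _ _).symm, filter_mem_eq_inter,
      Finset.inter_eq_right.2 (show MixedSet g ⊆ univ.image g from filter_subset _ _)]
  calc (univ.image g).card = ∑ χ ∈ univ.image g, (1 : ℕ) := e0
    _ = ∑ χ ∈ univ.image g,
        ((if (fib g χ).card = 1 ∧ fib g χ ⊆ AS n m then 1 else 0)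
          + (if (fib g χ).card = 1 ∧ fib g χ ⊆ BS n m then 1 else 0)
          + (if (fib g χ).card = 2 ∧ fib g χ ⊆ AS n m then 1 else 0)
          + (if (fib g χ).card = 2 ∧ fib g χ ⊆ BS n m then 1 else 0)
          + (if χ ∈ MixedSet g then 1 else 0)) :=
      Finset.sum_congr rfl (fun χ hχ => cat_ind g χ hχ (hg2 χ))
    _ = _ := by
      rw [Finset.sum_add_distrib, Finset.sum_add_distrib, Finset.sum_add_distrib,
        Finset.sum_add_distrib, (Finset.card_filter _ _).symm, (Finset.card_filter _ _).symm,
        (Finset.card_filter _ _).symm, (Finset.card_filter _ _).symm, e5]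

lemma subset_of_inter_card {T X : Finset ℕ} (h : X.card ≤ (T ∩ X).card) : X ⊆ T := by
  have he : T ∩ X = X := Finset.eq_of_subset_of_card_le inter_subset_right h
  intro x hx
  rw [← he] at hx
  exact (mem_inter.1 hx).1

end Counts2

section Phase2
variable {L : VV n m → Finset ℕ} {k d : ℕ}

lemma arith1 {d : ℕ} (hd : 1 ≤ d)
    (h : (2 + 3 * d) * (2 * d + 1) ≤ d * (2 * d + 1) + (d + 1) * (2 + 3 * d)) : False := by
  nlinarith

lemma arith2 {d : ℕ} (hd : 1 ≤ d)
    (h : (2 + 3 * d) * (2 * d + 1) ≤ (d + 2) * (2 * d + 1) + d * (2 + 3 * d)) : False := by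
  nlinarith

set_option maxHeartbeats 2000000 in
lemma phase2 (hd : 1 ≤ d) (hm : 3 * d ≤ m) (hn : 2 ≤ n) (hNk : n + m = k + d + 1)
    (hL : ∀ v, (L v).card = k) (hex : ∃ g, Good L k g) :
    ∃ g, Good L k g ∧ MixedSet g = ∅ := by
  classical
  have hdk : d + 2 ≤ k := by omega
  set S : Set ℕ := {r | ∃ g, Good L k g ∧ (MixedSet g).card = r} with hSdef
  have hSne : S.Nonempty := by
    obtain ⟨g, hg⟩ := hex
    exact ⟨(MixedSet g).card, g, hg, rfl⟩
  obtain ⟨g, hg, hgcard⟩ := Nat.sInf_mem hSne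
  rcases Nat.eq_zero_or_pos (MixedSet g).card with hzero | hpos
  · exact ⟨g, hg, card_eq_zero.1 hzero⟩
  exfalso
  obtain ⟨c, hc⟩ := card_pos.1 hpos
  have himp : ∀ g' : VV n m → ℕ, Good L k g' → MixedSet g' ⊆ (MixedSet g).erase c → False := by
    intro g' h1 hsub
    have h2 : (MixedSet g').card < (MixedSet g).card := by
      calc (MixedSet g').card ≤ ((MixedSet g).erase c).card := card_le_card hsub
        _ < (MixedSet g).card := by
            rw [card_erase_of_mem hc]
            omega
    have h3 := Nat.sInf_le (show (MixedSet g').card ∈ S from ⟨g', h1, rfl⟩)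
    omega
  obtain ⟨hcm1, hcm2⟩ := mem_mixedSet.1 hc
  obtain ⟨a0, ha0m⟩ := hcm1
  obtain ⟨b0, hb0m⟩ := hcm2
  rw [mem_inter] at ha0m hb0m
  obtain ⟨ha0f, ha0A⟩ := ha0m
  obtain ⟨hb0f, hb0B⟩ := hb0m
  have hab : a0 ≠ b0 := fun h => side_not_both (h ▸ ha0A) hb0B
  have hg1 := hg.1
  have hg2 := hg.2.1
  have hg3 := hg.2.2.1
  have hg4 := hg.2.2.2
  have hfcpair : fib g c = {a0, b0} := by
    refine (Finset.eq_of_subset_of_card_le ?_ ?_).symm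
    · intro x hx
      rcases mem_insert.1 hx with rfl | hx
      · exact ha0f
      · rw [mem_singleton] at hx; subst hx; exact hb0f
    · calc (fib g c).card ≤ 2 := hg2 c
        _ = ({a0, b0} : Finset (VV n m)).card := (card_pair hab).symm
  have hca0 : g a0 = c := mem_fib.1 ha0f
  have hcb0 : g b0 = c := mem_fib.1 hb0f
  have hcused : c ∈ univ.image g := mem_image.2 ⟨a0, mem_univ _, hca0⟩
  have hcLa : c ∈ L a0 := hca0 ▸ hg1 a0
  have hcLb : c ∈ L b0 := hcb0 ▸ hg1 b0
  -- ===== stuck facts =====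
  have SF1 : ∀ w', (w' = a0 ∨ w' = b0) → ∀ χ ∈ L w', χ ∈ univ.image g := by
    intro w' hw' χ hχ
    by_contra hun
    have hχc : χ ≠ c := fun h => hun (h ▸ hcused)
    have hfe : fib g χ = ∅ :=
      not_nonempty_iff_eq_empty.1 (fun hne => hun (fib_nonempty_iff.1 hne))
    obtain ⟨g', hgood', hsub⟩ := move_one hg hfcpair hw' hab hχ hχc
      (by rw [hfe]; simp) (by intro h1; rw [hfe] at h1; simp at h1)
      (by rw [hfe]; simpa using singleton_side w')
    exact himp g' hgood' hsub
  have SF1b : ∀ (w' : VV n m) (SD : Finset (VV n m)), (w' = a0 ∨ w' = b0) → w' ∈ SD →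
      (SD = AS n m ∨ SD = BS n m) → ∀ χ ∈ L w', χ ≠ c → (fib g χ).card = 1 →
      fib g χ ⊆ SD → k + 1 ≤ (supp L χ).card → False := by
    intro w' SD hw' hwSD hSD χ hχ hχc h1 hsubSD hbig
    have hside : insert w' (fib g χ) ⊆ AS n m ∨ insert w' (fib g χ) ⊆ BS n m := by
      rcases hSD with rfl | rfl
      · exact Or.inl (insert_subset hwSD hsubSD)
      · exact Or.inr (insert_subset hwSD hsubSD)
    obtain ⟨g', hgood', hsubm⟩ := move_one hg hfcpair hw' hab hχ hχc (by omega)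
      (fun _ => hbig) hside
    exact himp g' hgood' hsubm
  have herA : ({a0, b0} : Finset (VV n m)).erase a0 = {b0} :=
    Finset.erase_insert (by simp [hab])
  have herB : ({a0, b0} : Finset (VV n m)).erase b0 = {a0} := by
    rw [Finset.pair_comm]
    exact Finset.erase_insert (by simp [Ne.symm hab])
  have SFrotA : ∀ χ ∈ (L a0).erase c, ∀ u ∈ fib g χ, u ∈ BS n m →
      (fib g χ).erase u ⊆ AS n m → c ∉ L u := by
    intro χ hχ u hu huB hsubA hcL
    have hgu : g u = χ := mem_fib.1 hu
    have hχc : χ ≠ c := (mem_erase.1 hχ).1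
    have hαβ : c ≠ g u := by rw [hgu]; exact fun h => hχc h.symm
    have hund : u ∉ ({a0, b0} : Finset (VV n m)) := by
      intro hmem
      rcases mem_insert.1 hmem with rfl | hmem
      · exact side_not_both ha0A huB
      · rw [mem_singleton] at hmem; subst hmem
        exact hχc (hgu.symm.trans hcb0)
    have hsideβ : insert a0 ((fib g (g u)).erase u) ⊆ AS n m ∨
        insert a0 ((fib g (g u)).erase u) ⊆ BS n m := by
      left; rw [hgu]; exact insert_subset ha0A hsubA
    have hαcase : (c = c ∧ (insert u (({a0, b0} : Finset (VV n m)).erase a0) ⊆ AS n m ∨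
        insert u (({a0, b0} : Finset (VV n m)).erase a0) ⊆ BS n m)) ∨
        (fib g c = ∅ ∧ c ≠ c) := by
      left
      refine ⟨rfl, Or.inr ?_⟩
      rw [herA]
      refine insert_subset huB ?_
      intro x hx
      rw [mem_singleton] at hx; subst hx; exact hb0B
    obtain ⟨g', hgood', hsubm⟩ := move_two hg hfcpair (Or.inl rfl) hab hund hcL
      (by rw [hgu]; exact mem_of_mem_erase hχ) hαβ hsideβ hαcase
    exact himp g' hgood' hsubm
  have SFrotB : ∀ χ ∈ (L b0).erase c, ∀ u ∈ fib g χ, u ∈ AS n m →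
      (fib g χ).erase u ⊆ BS n m → c ∉ L u := by
    intro χ hχ u hu huA hsubB hcL
    have hgu : g u = χ := mem_fib.1 hu
    have hχc : χ ≠ c := (mem_erase.1 hχ).1
    have hαβ : c ≠ g u := by rw [hgu]; exact fun h => hχc h.symm
    have hund : u ∉ ({a0, b0} : Finset (VV n m)) := by
      intro hmem
      rcases mem_insert.1 hmem with rfl | hmem
      · exact hχc (hgu.symm.trans hca0)
      · rw [mem_singleton] at hmem; subst hmem
        exact side_not_both huA hb0B
    have hsideβ : insert b0 ((fib g (g u)).erase u) ⊆ AS n m ∨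
        insert b0 ((fib g (g u)).erase u) ⊆ BS n m := by
      right; rw [hgu]; exact insert_subset hb0B hsubB
    have hαcase : (c = c ∧ (insert u (({a0, b0} : Finset (VV n m)).erase b0) ⊆ AS n m ∨
        insert u (({a0, b0} : Finset (VV n m)).erase b0) ⊆ BS n m)) ∨
        (fib g c = ∅ ∧ c ≠ c) := by
      left
      refine ⟨rfl, Or.inl ?_⟩
      rw [herB]
      refine insert_subset huA ?_
      intro x hx
      rw [mem_singleton] at hx; subst hx; exact ha0A
    obtain ⟨g', hgood', hsubm⟩ := move_two hg hfcpair (Or.inr rfl) hab hund hcL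
      (by rw [hgu]; exact mem_of_mem_erase hχ) hαβ hsideβ hαcase
    exact himp g' hgood' hsubm
  have SFclos : ∀ (w' : VV n m) (SD : Finset (VV n m)), (w' = a0 ∨ w' = b0) → w' ∈ SD →
      (SD = AS n m ∨ SD = BS n m) → ∀ β ∈ (L w').erase c, fib g β ⊆ SD →
      ∀ u ∈ fib g β, ∀ χs ∈ L u, χs ∈ univ.image g := by
    intro w' SD hw' hwSD hSD β hβ hfibSD u hu χs hχs
    by_contra hun
    have hgu : g u = β := mem_fib.1 hu
    have hβc : β ≠ c := (mem_erase.1 hβ).1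
    have hfe : fib g χs = ∅ :=
      not_nonempty_iff_eq_empty.1 (fun hne => hun (fib_nonempty_iff.1 hne))
    have hund : u ∉ ({a0, b0} : Finset (VV n m)) := by
      intro hmem
      rcases mem_insert.1 hmem with rfl | hmem
      · exact hβc (hgu.symm.trans hca0)
      · rw [mem_singleton] at hmem; subst hmem
        exact hβc (hgu.symm.trans hcb0)
    have hαβ : χs ≠ g u := fun h => hun (by rw [h]; exact mem_image.2 ⟨u, mem_univ _, rfl⟩)
    have hsideβ : insert w' ((fib g (g u)).erase u) ⊆ AS n m ∨
        insert w' ((fib g (g u)).erase u) ⊆ BS n m := by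
      have hsub2 : insert w' ((fib g (g u)).erase u) ⊆ SD := by
        rw [hgu]
        exact insert_subset hwSD ((erase_subset _ _).trans hfibSD)
      rcases hSD with rfl | rfl
      · exact Or.inl hsub2
      · exact Or.inr hsub2
    obtain ⟨g', hgood', hsubm⟩ := move_two hg hfcpair hw' hab hund hχs
      (by rw [hgu]; exact mem_of_mem_erase hβ) hαβ hsideβ
      (Or.inr ⟨hfe, fun h => hun (h ▸ hcused)⟩)
    exact himp g' hgood' hsubm
  -- ===== category sets and counting =====
  set Used := univ.image g with hUsedDef
  set SAc := Used.filter (fun χ => (fib g χ).card = 1 ∧ fib g χ ⊆ AS n m) with hSAcDef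
  set SBc := Used.filter (fun χ => (fib g χ).card = 1 ∧ fib g χ ⊆ BS n m) with hSBcDef
  set AAc := Used.filter (fun χ => (fib g χ).card = 2 ∧ fib g χ ⊆ AS n m) with hAAcDef
  set BBc := Used.filter (fun χ => (fib g χ).card = 2 ∧ fib g χ ⊆ BS n m) with hBBcDef
  have hCA : n = SAc.card + 2 * AAc.card + (MixedSet g).card := count_A g hg2
  have hCB : m = SBc.card + 2 * BBc.card + (MixedSet g).card := count_B g hg2
  have hCU : Used.card = SAc.card + SBc.card + AAc.card + BBc.card + (MixedSet g).card :=
    count_used g hg2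
  set eA := (supp L c ∩ AS n m).card with heADef
  set eB := (supp L c ∩ BS n m).card with heBDef
  have heAB : eA + eB = (supp L c).card := card_inter_AS_BS (supp L c)
  have hbigc : k + 1 ≤ (supp L c).card := hg3 c (by rw [hfcpair]; exact card_pair hab)
  have heA1 : 1 ≤ eA := card_pos.2 ⟨a0, mem_inter.2 ⟨mem_supp.2 hcLa, ha0A⟩⟩
  have heB1 : 1 ≤ eB := card_pos.2 ⟨b0, mem_inter.2 ⟨mem_supp.2 hcLb, hb0B⟩⟩
  have heAn : eA ≤ n := by
    calc eA ≤ (AS n m).card := card_le_card inter_subset_right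
      _ = n := card_AS
  have heBm : eB ≤ m := by
    calc eB ≤ (BS n m).card := card_le_card inter_subset_right
      _ = m := card_BS
  set Ta := (L a0).erase c with hTaDef
  set Tb := (L b0).erase c with hTbDef
  have hTa_card : Ta.card + 1 = k := by
    rw [hTaDef, card_erase_of_mem hcLa, hL a0]
    omega
  have hTb_card : Tb.card + 1 = k := by
    rw [hTbDef, card_erase_of_mem hcLb, hL b0]
    omega
  have hTasub : Ta ⊆ SAc ∪ AAc ∪ BBc ∪ (SBc ∪ MixedSet g) := by
    intro χ hχ
    have hused : χ ∈ Used := SF1 a0 (Or.inl rfl) χ (mem_of_mem_erase hχ)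
    rcases mem_cat g χ (hg2 χ) hused with h | h | h | h | h
    · exact mem_union_left _ (mem_union_left _ (mem_union_left _ (mem_filter.2 ⟨hused, h⟩)))
    · exact mem_union_right _ (mem_union_left _ (mem_filter.2 ⟨hused, h⟩))
    · exact mem_union_left _ (mem_union_left _ (mem_union_right _ (mem_filter.2 ⟨hused, h⟩)))
    · exact mem_union_left _ (mem_union_right _ (mem_filter.2 ⟨hused, h⟩))
    · exact mem_union_right _ (mem_union_right _ h)
  have hTbsub : Tb ⊆ SBc ∪ BBc ∪ AAc ∪ (SAc ∪ MixedSet g) := by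
    intro χ hχ
    have hused : χ ∈ Used := SF1 b0 (Or.inr rfl) χ (mem_of_mem_erase hχ)
    rcases mem_cat g χ (hg2 χ) hused with h | h | h | h | h
    · exact mem_union_right _ (mem_union_left _ (mem_filter.2 ⟨hused, h⟩))
    · exact mem_union_left _ (mem_union_left _ (mem_union_left _ (mem_filter.2 ⟨hused, h⟩)))
    · exact mem_union_left _ (mem_union_right _ (mem_filter.2 ⟨hused, h⟩))
    · exact mem_union_left _ (mem_union_left _ (mem_union_right _ (mem_filter.2 ⟨hused, h⟩)))
    · exact mem_union_right _ (mem_union_right _ h)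
  have hsplit4 : ∀ (T X1 X2 X3 X4 : Finset ℕ), T ⊆ X1 ∪ X2 ∪ X3 ∪ X4 →
      T.card ≤ (T ∩ X1).card + (T ∩ X2).card + (T ∩ X3).card + (T ∩ X4).card := by
    intro T X1 X2 X3 X4 hsub
    calc T.card = (T ∩ (X1 ∪ X2 ∪ X3 ∪ X4)).card := by rw [Finset.inter_eq_left.2 hsub]
      _ ≤ _ := by
        rw [Finset.inter_union_distrib_left, Finset.inter_union_distrib_left,
          Finset.inter_union_distrib_left]
        exact le_trans (card_union_le _ _) (add_le_add_left (le_trans (card_union_le _ _)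
          (add_le_add_left (card_union_le _ _) _)) _)
  have hIA := hsplit4 Ta SAc AAc BBc (SBc ∪ MixedSet g) hTasub
  have hIB := hsplit4 Tb SBc BBc AAc (SAc ∪ MixedSet g) hTbsub
  have hxSA : (Ta ∩ SAc).card ≤ SAc.card := card_le_card inter_subset_right
  have hxAA : (Ta ∩ AAc).card ≤ AAc.card := card_le_card inter_subset_right
  have hxBB : (Ta ∩ BBc).card ≤ BBc.card := card_le_card inter_subset_right
  have hySB : (Tb ∩ SBc).card ≤ SBc.card := card_le_card inter_subset_right
  have hyBB : (Tb ∩ BBc).card ≤ BBc.card := card_le_card inter_subset_right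
  have hyAA : (Tb ∩ AAc).card ≤ AAc.card := card_le_card inter_subset_right
  -- ===== injections =====
  have hxSBMX : (Ta ∩ (SBc ∪ MixedSet g)).card + eB ≤ m := by
    classical
    set θ : ℕ → VV n m := fun χ =>
      if h : (fib g χ ∩ BS n m).Nonempty then h.choose else a0 with hθDef
    have hkey : ∀ χ ∈ Ta ∩ (SBc ∪ MixedSet g), θ χ ∈ fib g χ ∩ BS n m := by
      intro χ hχ
      obtain ⟨hχT, hχcat⟩ := mem_inter.1 hχ
      have hne : (fib g χ ∩ BS n m).Nonempty := by
        rcases mem_union.1 hχcat with h | h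
        · obtain ⟨hused, h1, hsub⟩ := mem_filter.1 h
          obtain ⟨v, hv⟩ := card_pos.1 (show 0 < (fib g χ).card by omega)
          exact ⟨v, mem_inter.2 ⟨hv, hsub hv⟩⟩
        · exact (mem_mixedSet.1 h).2
      rw [hθDef]
      simp only [dif_pos hne]
      exact hne.choose_spec
    have hmaps : ∀ χ ∈ Ta ∩ (SBc ∪ MixedSet g), θ χ ∈ BS n m \ supp L c := by
      intro χ hχ
      have hθm := mem_inter.1 (hkey χ hχ)
      obtain ⟨hχT, hχcat⟩ := mem_inter.1 hχ
      rw [mem_sdiff]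
      refine ⟨hθm.2, ?_⟩
      have hBone : (fib g χ ∩ BS n m).card ≤ 1 := by
        rcases mem_union.1 hχcat with h | h
        · have h1 := (mem_filter.1 h).2.1
          calc _ ≤ (fib g χ).card := card_le_card inter_subset_left
            _ = 1 := h1
        · have hmx := mem_mixedSet.1 h
          have h1A : 1 ≤ (fib g χ ∩ AS n m).card := card_pos.2 hmx.1
          have hle := hg2 χ
          have hABq := card_inter_AS_BS (fib g χ)
          omega
      have hsubA : (fib g χ).erase (θ χ) ⊆ AS n m := by
        intro y hy
        have hy1 := mem_of_mem_erase hy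
        have hyne : y ≠ θ χ := (mem_erase.1 hy).1
        rcases side_total y with hs | hs
        · exact hs
        · exfalso
          have hsub2 : ({y, θ χ} : Finset (VV n m)) ⊆ fib g χ ∩ BS n m := by
            intro x hx
            rcases mem_insert.1 hx with rfl | hx
            · exact mem_inter.2 ⟨hy1, hs⟩
            · rw [mem_singleton] at hx; subst hx
              exact mem_inter.2 ⟨hθm.1, hθm.2⟩
          have := card_le_card hsub2
          rw [card_pair hyne] at this
          omega
      intro hss
      exact SFrotA χ hχT (θ χ) hθm.1 hθm.2 hsubA (mem_supp.1 hss)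
    have hinj : Set.InjOn θ (↑(Ta ∩ (SBc ∪ MixedSet g)) : Set ℕ) := by
      intro χ1 h1 χ2 h2 heq
      have e1 : g (θ χ1) = χ1 := mem_fib.1 (mem_inter.1 (hkey χ1 (mem_coe.1 h1))).1
      have e2 : g (θ χ2) = χ2 := mem_fib.1 (mem_inter.1 (hkey χ2 (mem_coe.1 h2))).1
      rw [← e1, ← e2, heq]
    have hmain : (Ta ∩ (SBc ∪ MixedSet g)).card ≤ (BS n m \ supp L c).card :=
      Finset.card_le_card_of_injOn θ hmaps hinj
    have hsd : (BS n m \ supp L c).card + (BS n m ∩ supp L c).card = (BS n m).card :=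
      Finset.card_sdiff_add_card_inter _ _
    have hcomm : (BS n m ∩ supp L c).card = eB := by rw [Finset.inter_comm]
    have hBcard : (BS n m).card = m := card_BS
    omega
  have hySAMX : (Tb ∩ (SAc ∪ MixedSet g)).card + eA ≤ n := by
    classical
    set θ : ℕ → VV n m := fun χ =>
      if h : (fib g χ ∩ AS n m).Nonempty then h.choose else b0 with hθDef
    have hkey : ∀ χ ∈ Tb ∩ (SAc ∪ MixedSet g), θ χ ∈ fib g χ ∩ AS n m := by
      intro χ hχ
      obtain ⟨hχT, hχcat⟩ := mem_inter.1 hχ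
      have hne : (fib g χ ∩ AS n m).Nonempty := by
        rcases mem_union.1 hχcat with h | h
        · obtain ⟨hused, h1, hsub⟩ := mem_filter.1 h
          obtain ⟨v, hv⟩ := card_pos.1 (show 0 < (fib g χ).card by omega)
          exact ⟨v, mem_inter.2 ⟨hv, hsub hv⟩⟩
        · exact (mem_mixedSet.1 h).1
      rw [hθDef]
      simp only [dif_pos hne]
      exact hne.choose_spec
    have hmaps : ∀ χ ∈ Tb ∩ (SAc ∪ MixedSet g), θ χ ∈ AS n m \ supp L c := by
      intro χ hχ
      have hθm := mem_inter.1 (hkey χ hχ)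
      obtain ⟨hχT, hχcat⟩ := mem_inter.1 hχ
      rw [mem_sdiff]
      refine ⟨hθm.2, ?_⟩
      have hAone : (fib g χ ∩ AS n m).card ≤ 1 := by
        rcases mem_union.1 hχcat with h | h
        · have h1 := (mem_filter.1 h).2.1
          calc _ ≤ (fib g χ).card := card_le_card inter_subset_left
            _ = 1 := h1
        · have hmx := mem_mixedSet.1 h
          have h1B : 1 ≤ (fib g χ ∩ BS n m).card := card_pos.2 hmx.2
          have hle := hg2 χ
          have hABq := card_inter_AS_BS (fib g χ)
          omega
      have hsubB : (fib g χ).erase (θ χ) ⊆ BS n m := by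
        intro y hy
        have hy1 := mem_of_mem_erase hy
        have hyne : y ≠ θ χ := (mem_erase.1 hy).1
        rcases side_total y with hs | hs
        · exfalso
          have hsub2 : ({y, θ χ} : Finset (VV n m)) ⊆ fib g χ ∩ AS n m := by
            intro x hx
            rcases mem_insert.1 hx with rfl | hx
            · exact mem_inter.2 ⟨hy1, hs⟩
            · rw [mem_singleton] at hx; subst hx
              exact mem_inter.2 ⟨hθm.1, hθm.2⟩
          have := card_le_card hsub2
          rw [card_pair hyne] at this
          omega
        · exact hs
      intro hss
      exact SFrotB χ hχT (θ χ) hθm.1 hθm.2 hsubB (mem_supp.1 hss)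
    have hinj : Set.InjOn θ (↑(Tb ∩ (SAc ∪ MixedSet g)) : Set ℕ) := by
      intro χ1 h1 χ2 h2 heq
      have e1 : g (θ χ1) = χ1 := mem_fib.1 (mem_inter.1 (hkey χ1 (mem_coe.1 h1))).1
      have e2 : g (θ χ2) = χ2 := mem_fib.1 (mem_inter.1 (hkey χ2 (mem_coe.1 h2))).1
      rw [← e1, ← e2, heq]
    have hmain : (Tb ∩ (SAc ∪ MixedSet g)).card ≤ (AS n m \ supp L c).card :=
      Finset.card_le_card_of_injOn θ hmaps hinj
    have hsd : (AS n m \ supp L c).card + (AS n m ∩ supp L c).card = (AS n m).card :=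
      Finset.card_sdiff_add_card_inter _ _
    have hcomm : (AS n m ∩ supp L c).card = eA := by rw [Finset.inter_comm]
    have hAcard : (AS n m).card = n := card_AS
    omega
  -- ===== omega extraction of the tight structure =====
  have hdM1 : 1 ≤ (MixedSet g).card := hpos
  have hn2 : n = 2 := by omega
  have hm3d : m = 3 * d := by omega
  have hk2d : k = 2 * d + 1 := by omega
  have hdM : (MixedSet g).card = 1 := by omega
  have hdAA : AAc.card = 0 := by omega
  have hsA1 : SAc.card = 1 := by omega
  have heAval : eA = 1 ∨ eA = 2 := by omega
  have hSAsub : SAc ⊆ Ta := subset_of_inter_card (by omega)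
  have hBBsubA : BBc ⊆ Ta := subset_of_inter_card (by omega)
  have hSBsub : SBc ⊆ Tb := subset_of_inter_card (by omega)
  have hBBsubB : BBc ⊆ Tb := subset_of_inter_card (by omega)
  have hAAe : AAc = ∅ := card_eq_zero.1 hdAA
  have hMXc : MixedSet g = {c} := by
    obtain ⟨x, hx⟩ := card_eq_one.1 hdM
    rw [hx] at hc
    rw [mem_singleton] at hc
    rw [hx, hc]
  -- ===== the special single color ξ on the A side =====
  obtain ⟨ξ, hξeq⟩ := card_eq_one.1 hsA1
  have hξS : ξ ∈ SAc := by rw [hξeq]; exact mem_singleton_self ξ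
  have hξTa : ξ ∈ Ta := hSAsub hξS
  have hξfacts := mem_filter.1 hξS
  have hξk : (supp L ξ).card ≤ k := by
    by_contra hbig
    push_neg at hbig
    exact SF1b a0 (AS n m) (Or.inl rfl) ha0A (Or.inl rfl) ξ (mem_of_mem_erase hξTa)
      (mem_erase.1 hξTa).1 hξfacts.2.1 hξfacts.2.2 hbig
  have hSBk : ∀ χ ∈ SBc, (supp L χ).card ≤ k := by
    intro χ hχ
    have hχfacts := mem_filter.1 hχ
    by_contra hbig
    push_neg at hbig
    exact SF1b b0 (BS n m) (Or.inr rfl) hb0B (Or.inr rfl) χ (mem_of_mem_erase (hSBsub hχ))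
      (mem_erase.1 (hSBsub hχ)).1 hχfacts.2.1 hχfacts.2.2 hbig
  -- ===== closure: every list is inside the used colors =====
  have hAllUsed : ∀ v : VV n m, L v ⊆ Used := by
    intro v χs hχs
    have hβU : g v ∈ Used := mem_image.2 ⟨v, mem_univ _, rfl⟩
    have hvfib : v ∈ fib g (g v) := self_mem_fib g v
    rcases mem_cat g (g v) (hg2 _) hβU with h | h | h | h | h
    · have hmem : g v ∈ SAc := mem_filter.2 ⟨hβU, h⟩
      exact SFclos a0 (AS n m) (Or.inl rfl) ha0A (Or.inl rfl) (g v) (hSAsub hmem) h.2 v hvfib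
        χs hχs
    · have hmem : g v ∈ SBc := mem_filter.2 ⟨hβU, h⟩
      exact SFclos b0 (BS n m) (Or.inr rfl) hb0B (Or.inr rfl) (g v) (hSBsub hmem) h.2 v hvfib
        χs hχs
    · have hmem : g v ∈ AAc := mem_filter.2 ⟨hβU, h⟩
      rw [hAAe] at hmem
      exact absurd hmem (notMem_empty _)
    · have hmem : g v ∈ BBc := mem_filter.2 ⟨hβU, h⟩
      exact SFclos b0 (BS n m) (Or.inr rfl) hb0B (Or.inr rfl) (g v) (hBBsubB hmem) h.2 v hvfib
        χs hχs
    · have hgvc : g v = c := by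
        rw [hMXc, mem_singleton] at h
        exact h
      have hvm : v ∈ ({a0, b0} : Finset (VV n m)) := by rw [← hfcpair]; exact mem_fib.2 hgvc
      rcases mem_insert.1 hvm with rfl | hvm
      · exact SF1 v (Or.inl rfl) χs hχs
      · rw [mem_singleton] at hvm; subst hvm
        exact SF1 v (Or.inr rfl) χs hχs
  -- ===== mass counting =====
  have hmass : (n + m) * k = ∑ χ ∈ Used, (supp L χ).card := by
    have h0 : ∀ v ∈ (univ : Finset (VV n m)), L v ⊆ Used := fun v _ => hAllUsed v
    have h1 := double_count L univ Used h0
    rw [Finset.sum_congr rfl (fun v (_ : v ∈ (univ : Finset (VV n m))) => hL v), sum_const,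
      smul_eq_mul] at h1
    have h2 : (univ : Finset (VV n m)).card = n + m := by simp [card_univ]
    rw [h2] at h1
    rw [h1]
    exact Finset.sum_congr rfl fun χ _ => rfl
  set Sp := insert ξ SBc with hSpDef
  have hξnSB : ξ ∉ SBc := by
    intro hξB
    have hξB2 := (mem_filter.1 hξB).2.2
    obtain ⟨v, hv⟩ := card_pos.1 (show 0 < (fib g ξ).card by omega)
    exact side_not_both (hξfacts.2.2 hv) (hξB2 hv)
  have hSpcard : Sp.card = SBc.card + 1 := by rw [hSpDef, card_insert_of_notMem hξnSB]
  have hSpsub : Sp ⊆ Used := by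
    rw [hSpDef]
    exact insert_subset hξfacts.1 (filter_subset _ _)
  have hSpk : ∀ χ ∈ Sp, (supp L χ).card ≤ k := by
    intro χ hχ
    rcases mem_insert.1 hχ with rfl | hχ
    · exact hξk
    · exact hSBk χ hχ
  have hsplitm : ∑ χ ∈ Used \ Sp, (supp L χ).card + ∑ χ ∈ Sp, (supp L χ).card
      = ∑ χ ∈ Used, (supp L χ).card := Finset.sum_sdiff hSpsub
  have hb1 : ∑ χ ∈ Sp, (supp L χ).card ≤ Sp.card * k := by
    calc ∑ χ ∈ Sp, (supp L χ).card ≤ ∑ _χ ∈ Sp, k := sum_le_sum hSpk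
      _ = Sp.card * k := by rw [sum_const, smul_eq_mul]
  have hb2 : ∑ χ ∈ Used \ Sp, (supp L χ).card ≤ (Used \ Sp).card * (n + m) := by
    calc ∑ χ ∈ Used \ Sp, (supp L χ).card ≤ ∑ _χ ∈ Used \ Sp, (n + m) :=
        sum_le_sum (fun χ _ => card_supp_le L χ)
      _ = _ := by rw [sum_const, smul_eq_mul]
  have hsdc : (Used \ Sp).card + Sp.card = Used.card := by
    rw [card_sdiff_of_subset hSpsub]
    have := card_le_card hSpsub
    omega
  have hfin : (n + m) * k ≤ Sp.card * k + (Used \ Sp).card * (n + m) := by linarith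
  -- final numeric contradiction
  rcases heAval with heA | heA
  · have hq : Sp.card = d := by omega
    have hr : (Used \ Sp).card = d + 1 := by omega
    rw [hq, hr, hk2d, hn2, hm3d] at hfin
    exact arith1 hd hfin
  · have hq : Sp.card = d + 2 := by omega
    have hr : (Used \ Sp).card = d := by omega
    rw [hq, hr, hk2d, hn2, hm3d] at hfin
    exact arith2 hd hfin



end Phase2

section Final
variable {L : VV n m → Finset ℕ} {k d : ℕ}

lemma mult_eq_supp (L : VV n m → Finset ℕ) (c : ℕ) : mult L c = (supp L c).card := rfl

lemma final_coloring (hd : 1 ≤ d) (hm : 3 * d ≤ m) (hn : 2 ≤ n) (hNk : n + m = k + d + 1)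
    (hL : ∀ v, (L v).card = k) (g : VV n m → ℕ) (hg : Good L k g)
    (hmix : MixedSet g = ∅) :
    IsProportionalColoring (completeBipartiteGraph (Fin n) (Fin m)) L k g := by
  classical
  obtain ⟨hg1, hg2, hg3, hg4⟩ := hg
  have hdk : d + 2 ≤ k := by omega
  constructor
  · refine ⟨hg1, ?_⟩
    intro u w hadj heq
    have hmixmem : g u ∈ MixedSet g := by
      have huse : g u ∈ univ.image g := mem_image.2 ⟨u, mem_univ u, rfl⟩
      rcases hadj with ⟨hul, hwr⟩ | ⟨hur, hwl⟩
      · refine mem_filter.2 ⟨huse, ⟨u, ?_⟩, ⟨w, ?_⟩⟩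
        · exact mem_inter.2 ⟨self_mem_fib g u, mem_filter.2 ⟨mem_univ u, hul⟩⟩
        · refine mem_inter.2 ⟨?_, mem_filter.2 ⟨mem_univ w, hwr⟩⟩
          rw [mem_fib, heq]
      · refine mem_filter.2 ⟨huse, ⟨w, ?_⟩, ⟨u, ?_⟩⟩
        · refine mem_inter.2 ⟨?_, mem_filter.2 ⟨mem_univ w, hwl⟩⟩
          rw [mem_fib, heq]
        · exact mem_inter.2 ⟨self_mem_fib g u, mem_filter.2 ⟨mem_univ u, hur⟩⟩
    rw [hmix] at hmixmem
    exact notMem_empty _ hmixmem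
  · intro c hcpal
    have hfibeq : univ.filter (fun v => g v = c) = fib g c := rfl
    rw [hfibeq, mult_eq_supp]
    set η := (supp L c).card with hη
    have hη1 : 1 ≤ η := by
      obtain ⟨v, _, hv⟩ := mem_biUnion.1 hcpal
      refine card_pos.2 ⟨v, mem_supp.2 hv⟩
    have hηN : η ≤ k + d + 1 := by
      have := card_supp_le L c
      omega
    have hcard2 := hg2 c
    by_cases hbig : k + 1 ≤ η
    · -- strictly big: card ∈ {1, 2}
      have hc1 : 1 ≤ (fib g c).card := hg4 c (by omega)
      rcases (by omega : (fib g c).card = 1 ∨ (fib g c).card = 2) with h | h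
      · left
        rw [h]
        symm
        apply Nat.div_eq_of_lt_le
        · omega
        · omega
      · right
        rw [h]
        symm
        apply Nat.div_eq_of_lt_le
        · omega
        · omega
    · by_cases heq : η = k
      · -- exactly k: card = 1, floor = 1
        have hc1 : 1 ≤ (fib g c).card := hg4 c (by omega)
        have hne2 : (fib g c).card ≠ 2 := fun h2 => by
          have := hg3 c h2
          omega
        left
        have : (fib g c).card = 1 := by omega
        rw [this, heq, Nat.div_self (by omega)]
      · -- small: card ∈ {0, 1}
        have hne2 : (fib g c).card ≠ 2 := fun h2 => by
          have := hg3 c h2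
          omega
        rcases (by omega : (fib g c).card = 0 ∨ (fib g c).card = 1) with h | h
        · left
          rw [h, Nat.div_eq_of_lt (by omega)]
        · right
          rw [h]
          symm
          apply Nat.div_eq_of_lt_le
          · omega
          · omega

end Final

end Stmt12Proof

/-- For `m ≥ 3d`, `n ≥ 2`, `d ≥ 1`, `K_{n,m}` is proportionally
`(m+n-d-1)`-choosable, hence `χ_pc(K_{n,m}) ≤ m+n-d-1`. -/

theorem stmt12 (m n d : ℕ) (hd : 1 ≤ d) (hm : 3 * d ≤ m) (hn : 2 ≤ n) :
    ProportionallyChoosable (KBip n m) (m + n - d - 1) ∧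
      propChoiceNumber (KBip n m) ≤ m + n - d - 1 := by
  have hpc : ProportionallyChoosable (KBip n m) (m + n - d - 1) := by
    intro L hL
    set k := m + n - d - 1 with hkdef
    have hNk : n + m = k + d + 1 := by omega
    have hL' : ∀ v, (L v).card = k := hL
    obtain ⟨g, hg, hmix⟩ := Stmt12Proof.phase2 hd hm hn hNk hL'
      (Stmt12Proof.phase1 (by omega) hNk (by omega) hL')
    exact ⟨g, Stmt12Proof.final_coloring hd hm hn hNk hL' g hg hmix⟩
  exact ⟨hpc, Nat.sInf_le hpc⟩
end

section
/- For all natural numbers n, m with 2 ≤ n ≤ m: max{n+1, 1 + ⌈m/2⌉} ≤ χ_pc(K_{n,m}) ≤ n + m − 1. -/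
open Finset SimpleGraph

section Helpers
variable {α β : Type*} [Fintype α] [Fintype β]

lemma card_filter_sumType (p : α ⊕ β → Prop) [DecidablePred p] :
    (Finset.univ.filter p).card
      = (Finset.univ.filter (fun a => p (Sum.inl a))).card
        + (Finset.univ.filter (fun b => p (Sum.inr b))).card := by
  classical
  rw [← Finset.card_toLeft_add_card_toRight (u := Finset.univ.filter p)]
  have h1 : (Finset.univ.filter p).toLeft = Finset.univ.filter (fun a => p (Sum.inl a)) := by
    ext a; simp
  have h2 : (Finset.univ.filter p).toRight = Finset.univ.filter (fun b => p (Sum.inr b)) := by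
    ext b; simp
  rw [h1, h2]

lemma card_filter_fin (m : ℕ) (p : ℕ → Prop) [DecidablePred p] :
    (Finset.univ.filter (fun b : Fin m => p (b : ℕ))).card
      = ((Finset.range m).filter p).card := by
  refine Finset.card_nbij (fun b => (b : ℕ)) ?_ ?_ ?_
  · intro a ha
    simp at ha
    simp [Finset.mem_filter, Finset.mem_range, a.isLt, ha]
  · intro a _ b _ h; exact Fin.ext h
  · intro x hx
    simp only [Finset.coe_filter, Finset.mem_range, Set.mem_setOf_eq] at hx
    exact ⟨⟨x, hx.1⟩, by simp [hx.2], rfl⟩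

lemma range_filter_lt_card {m s : ℕ} (h : s ≤ m) :
    ((Finset.range m).filter (fun x => x < s)).card = s := by
  have : (Finset.range m).filter (fun x => x < s) = Finset.range s := by
    ext x; simp only [Finset.mem_filter, Finset.mem_range]; omega
  rw [this, Finset.card_range]

lemma range_filter_eq_card {m t : ℕ} (h : t < m) :
    ((Finset.range m).filter (fun x => x = t)).card = 1 := by
  rw [Finset.filter_eq']; simp [Finset.mem_range, h]

end Helpers

lemma kbip_adj {n m : ℕ} (a : Fin n) (b : Fin m) :
    (completeBipartiteGraph (Fin n) (Fin m)).Adj (Sum.inl a) (Sum.inr b) := by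
  simp [completeBipartiteGraph]

section ClassCards
variable {n m k : ℕ} {L : Fin n ⊕ Fin m → Finset ℕ} {f : Fin n ⊕ Fin m → ℕ}

lemma class_card_two (hk : 1 ≤ k)
    (hf : IsProportionalColoring (KBip n m) L k f) {c : ℕ} (hc : c ∈ palette L)
    (hmult : mult L c = 2 * k) :
    (Finset.univ.filter (fun v => f v = c)).card = 2 := by
  rcases hf.2 c hc with h | h <;> rw [hmult] at h <;> rw [h]
  · exact Nat.div_eq_of_lt_le (by omega) (by omega)
  · exact Nat.div_eq_of_lt_le (by omega) (by omega)

lemma class_card_one (hk : 1 ≤ k)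
    (hf : IsProportionalColoring (KBip n m) L k f) {c : ℕ} (hc : c ∈ palette L)
    (hmult : mult L c = k) :
    (Finset.univ.filter (fun v => f v = c)).card = 1 := by
  rcases hf.2 c hc with h | h <;> rw [hmult] at h <;> rw [h]
  · exact Nat.div_eq_of_lt_le (by omega) (by omega)
  · exact Nat.div_eq_of_lt_le (by omega) (by omega)

/-- If the color class of `c` has exactly two members, the count on the `A` side is even. -/
lemma cardA_even (hproper : IsProperListColoring (KBip n m) L f) {c : ℕ}
    (h2 : (Finset.univ.filter (fun v => f v = c)).card = 2) :
    Even (Finset.univ.filter (fun a : Fin n => f (Sum.inl a) = c)).card := by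
  have hsplit := card_filter_sumType (fun v : Fin n ⊕ Fin m => f v = c)
  rw [h2] at hsplit
  by_cases hA : (Finset.univ.filter (fun a : Fin n => f (Sum.inl a) = c)).card = 0
  · simp [hA]
  · have hB : (Finset.univ.filter (fun b : Fin m => f (Sum.inr b) = c)).card = 0 := by
      by_contra hB
      obtain ⟨a, ha⟩ := Finset.card_pos.1 (Nat.pos_of_ne_zero hA)
      obtain ⟨b, hb⟩ := Finset.card_pos.1 (Nat.pos_of_ne_zero hB)
      simp only [Finset.mem_filter] at ha hb
      exact hproper.2 (kbip_adj a b) (ha.2.trans hb.2.symm)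
    refine ⟨1, by omega⟩

/-- If no `B`-vertex can be colored `c`, the `A`-side count equals the class size. -/
lemma cardA_eq_class (hproper : IsProperListColoring (KBip n m) L f) {c : ℕ}
    (hnotB : ∀ b : Fin m, c ∉ L (Sum.inr b)) :
    (Finset.univ.filter (fun a : Fin n => f (Sum.inl a) = c)).card
      = (Finset.univ.filter (fun v => f v = c)).card := by
  have hsplit := card_filter_sumType (fun v : Fin n ⊕ Fin m => f v = c)
  have hB : (Finset.univ.filter (fun b : Fin m => f (Sum.inr b) = c)).card = 0 := by
    rw [Finset.card_eq_zero, Finset.filter_eq_empty_iff]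
    intro b _ hb
    exact hnotB b (hb ▸ hproper.1 (Sum.inr b))
  omega

lemma cardB_eq_class (hproper : IsProperListColoring (KBip n m) L f) {c : ℕ}
    (hnotA : ∀ a : Fin n, c ∉ L (Sum.inl a)) :
    (Finset.univ.filter (fun b : Fin m => f (Sum.inr b) = c)).card
      = (Finset.univ.filter (fun v => f v = c)).card := by
  have hsplit := card_filter_sumType (fun v : Fin n ⊕ Fin m => f v = c)
  have hA : (Finset.univ.filter (fun a : Fin n => f (Sum.inl a) = c)).card = 0 := by
    rw [Finset.card_eq_zero, Finset.filter_eq_empty_iff]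
    intro a _ ha
    exact hnotA a (ha ▸ hproper.1 (Sum.inl a))
  omega

end ClassCards

/-- Construction (a): `n` odd, shared colors of multiplicity `2k`. -/
lemma not_choos_a (n m k : ℕ) (hk : 1 ≤ k) (hodd : Odd n) (hn2k : n ≤ 2*k)
    (hs : 2*k ≤ n + m) : ¬ ProportionallyChoosable (KBip n m) k := by
  intro hch
  set s := 2*k - n with hsdef
  set L : Fin n ⊕ Fin m → Finset ℕ :=
    Sum.elim (fun _ => Finset.range k)
      (fun b => if (b : ℕ) < s then Finset.range k
        else Finset.Ico (((b : ℕ)+2)*k) (((b : ℕ)+2)*k + k)) with hL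
  have hassign : IsKAssignment L k := by
    rintro (a | b)
    · simp [hL]
    · simp only [hL, Sum.elim_inr]
      split
      · simp
      · simp [Nat.card_Ico]
  obtain ⟨f, hf⟩ := hch L hassign
  have hproper := hf.1
  have hn1 : 1 ≤ n := by
    rcases hodd with ⟨t, ht⟩; omega
  have hpal : ∀ c < k, c ∈ palette L := by
    intro c hc
    exact Finset.mem_biUnion.2 ⟨Sum.inl ⟨0, hn1⟩, Finset.mem_univ _, by simp [hL, hc]⟩
  have hmult : ∀ c < k, mult L c = 2 * k := by
    intro c hc
    unfold mult
    rw [card_filter_sumType]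
    have hA : (Finset.univ.filter (fun a : Fin n => c ∈ L (Sum.inl a))).card = n := by
      have : (Finset.univ.filter (fun a : Fin n => c ∈ L (Sum.inl a))) = Finset.univ := by
        apply Finset.filter_true_of_mem; intro a _; simp [hL, hc]
      rw [this, Finset.card_univ, Fintype.card_fin]
    have hB : (Finset.univ.filter (fun b : Fin m => c ∈ L (Sum.inr b))).card = s := by
      have he : ∀ b : Fin m, (c ∈ L (Sum.inr b)) ↔ ((b:ℕ) < s) := by
        intro b
        simp only [hL, Sum.elim_inr]
        by_cases hb : (b:ℕ) < s
        · simp [hb, hc]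
        · simp only [hb, if_false]
          have hkk : k ≤ ((b:ℕ)+2)*k := Nat.le_mul_of_pos_left k (by omega)
          rw [Finset.mem_Ico]
          constructor
          · rintro ⟨h1, h2⟩; exact absurd (hkk.trans h1) (by omega)
          · exact False.elim
      rw [Finset.filter_congr (fun b _ => he b), card_filter_fin m (fun x => x < s),
        range_filter_lt_card (by omega)]
    rw [hA, hB]; omega
  have heven : ∀ c ∈ Finset.range k,
      Even (Finset.univ.filter (fun a : Fin n => f (Sum.inl a) = c)).card := by
    intro c hc
    rw [Finset.mem_range] at hc
    exact cardA_even hproper (class_card_two hk hf (hpal c hc) (hmult c hc))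
  have hsum : n = ∑ c ∈ Finset.range k,
      (Finset.univ.filter (fun a : Fin n => f (Sum.inl a) = c)).card := by
    have := Finset.card_eq_sum_card_fiberwise
      (f := fun a : Fin n => f (Sum.inl a)) (s := Finset.univ) (t := Finset.range k)
      (fun a _ => by simpa [hL] using hproper.1 (Sum.inl a))
    simpa using this
  have : Even n := hsum ▸ Finset.even_sum _ heven
  exact (Nat.not_even_iff_odd.2 hodd) this

lemma range_filter_ne_card {m t : ℕ} (h : t < m) :
    ((Finset.range m).filter (fun x => ¬ (x = t))).card = m - 1 := by
  have := Finset.card_filter_add_card_filter_not (s := Finset.range m)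
    (p := fun x => x = t)
  rw [range_filter_eq_card h] at this
  simp only [Finset.card_range] at this
  omega

/-- Construction (d): `n` even, extra color `k` on the `A` side. -/
lemma not_choos_d (n m k : ℕ) (hk : 1 ≤ k) (hkn : k ≤ n) (hn2k : n ≤ 2*k)
    (hs : 2*k + 1 ≤ n + m) (heven : Even n) :
    ¬ ProportionallyChoosable (KBip n m) k := by
  intro hch
  set s := 2*k + 1 - n with hsdef
  set L : Fin n ⊕ Fin m → Finset ℕ :=
    Sum.elim
      (fun i => if (i : ℕ) < k then insert k ((Finset.range k).erase (i : ℕ))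
        else Finset.range k)
      (fun b => if (b : ℕ) < s then Finset.range k
        else Finset.Ico (((b : ℕ)+2)*k) (((b : ℕ)+2)*k + k)) with hL
  have hm1 : 1 ≤ m := by omega
  have hassign : IsKAssignment L k := by
    rintro (a | b)
    · simp only [hL, Sum.elim_inl]
      split
      · rename_i ha
        rw [Finset.card_insert_of_notMem (by simp),
          Finset.card_erase_of_mem (by simp [ha]), Finset.card_range]
        omega
      · simp
    · simp only [hL, Sum.elim_inr]
      split
      · simp
      · simp [Nat.card_Ico]
  obtain ⟨f, hf⟩ := hch L hassign
  have hproper := hf.1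
  have hpal : ∀ c < k, c ∈ palette L := by
    intro c hc
    refine Finset.mem_biUnion.2 ⟨Sum.inr ⟨0, hm1⟩, Finset.mem_univ _, ?_⟩
    have h0 : (0:ℕ) < s := by omega
    simp [hL, h0, hc]
  have hpalk : (k : ℕ) ∈ palette L := by
    refine Finset.mem_biUnion.2 ⟨Sum.inl ⟨0, by omega⟩, Finset.mem_univ _, ?_⟩
    have h0 : (0:ℕ) < k := hk
    simp [hL, h0]
  have hmult : ∀ c < k, mult L c = 2 * k := by
    intro c hc
    unfold mult
    rw [card_filter_sumType]
    have hA : (Finset.univ.filter (fun a : Fin n => c ∈ L (Sum.inl a))).card = n - 1 := by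
      have he : ∀ i : Fin n, (c ∈ L (Sum.inl i)) ↔ ¬ ((i:ℕ) = c) := by
        intro i
        simp only [hL, Sum.elim_inl]
        by_cases hi : (i:ℕ) < k
        · simp only [hi, if_true, Finset.mem_insert, Finset.mem_erase, Finset.mem_range]
          constructor
          · rintro (h | ⟨h1, h2⟩) <;> omega
          · intro h; exact Or.inr ⟨fun hce => h hce.symm, hc⟩
        · simp only [hi, if_false, Finset.mem_range, hc, true_iff]
          omega
      rw [Finset.filter_congr (fun i _ => he i), card_filter_fin n (fun x => ¬ (x = c)),
        range_filter_ne_card (by omega)]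
    have hB : (Finset.univ.filter (fun b : Fin m => c ∈ L (Sum.inr b))).card = s := by
      have he : ∀ b : Fin m, (c ∈ L (Sum.inr b)) ↔ ((b:ℕ) < s) := by
        intro b
        simp only [hL, Sum.elim_inr]
        by_cases hb : (b:ℕ) < s
        · simp [hb, hc]
        · simp only [hb, if_false]
          have hkk : k ≤ ((b:ℕ)+2)*k := Nat.le_mul_of_pos_left k (by omega)
          rw [Finset.mem_Ico]
          constructor
          · rintro ⟨h1, h2⟩; exact absurd (hkk.trans h1) (by omega)
          · exact False.elim
      rw [Finset.filter_congr (fun b _ => he b), card_filter_fin m (fun x => x < s),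
        range_filter_lt_card (by omega)]
    rw [hA, hB]; omega
  have hmultk : mult L k = k := by
    unfold mult
    rw [card_filter_sumType]
    have hA : (Finset.univ.filter (fun a : Fin n => (k:ℕ) ∈ L (Sum.inl a))).card = k := by
      have he : ∀ i : Fin n, ((k:ℕ) ∈ L (Sum.inl i)) ↔ ((i:ℕ) < k) := by
        intro i
        simp only [hL, Sum.elim_inl]
        by_cases hi : (i:ℕ) < k
        · simp [hi]
        · simp [hi]
      rw [Finset.filter_congr (fun i _ => he i), card_filter_fin n (fun x => x < k),
        range_filter_lt_card (by omega)]
    have hB : (Finset.univ.filter (fun b : Fin m => (k:ℕ) ∈ L (Sum.inr b))).card = 0 := by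
      rw [Finset.card_eq_zero, Finset.filter_eq_empty_iff]
      intro b _
      simp only [hL, Sum.elim_inr]
      split
      · simp
      · have hkk : 2*k ≤ ((b:ℕ)+2)*k := Nat.mul_le_mul_right k (by omega)
        rw [Finset.mem_Ico]; omega
    rw [hA, hB]; omega
  have hnotBk : ∀ b : Fin m, (k:ℕ) ∉ L (Sum.inr b) := by
    intro b
    simp only [hL, Sum.elim_inr]
    split
    · simp
    · have hkk : 2*k ≤ ((b:ℕ)+2)*k := Nat.mul_le_mul_right k (by omega)
      rw [Finset.mem_Ico]; omega
  have hcardAk : (Finset.univ.filter (fun a : Fin n => f (Sum.inl a) = k)).card = 1 := by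
    rw [cardA_eq_class hproper hnotBk]
    exact class_card_one hk hf hpalk hmultk
  have heven' : ∀ c ∈ Finset.range k,
      Even (Finset.univ.filter (fun a : Fin n => f (Sum.inl a) = c)).card := by
    intro c hc
    rw [Finset.mem_range] at hc
    exact cardA_even hproper (class_card_two hk hf (hpal c hc) (hmult c hc))
  have hsum : n = ∑ c ∈ Finset.range (k+1),
      (Finset.univ.filter (fun a : Fin n => f (Sum.inl a) = c)).card := by
    have := Finset.card_eq_sum_card_fiberwise
      (f := fun a : Fin n => f (Sum.inl a)) (s := Finset.univ) (t := Finset.range (k+1))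
      (fun a _ => by
        have hmem := hproper.1 (Sum.inl a)
        simp only [hL, Sum.elim_inl] at hmem
        show f (Sum.inl a) ∈ Finset.range (k+1)
        rw [Finset.mem_range]
        split at hmem
        · rcases Finset.mem_insert.1 hmem with h | h
          · omega
          · have := (Finset.mem_erase.1 h).2; rw [Finset.mem_range] at this; omega
        · rw [Finset.mem_range] at hmem; omega)
    simpa using this
  rw [Finset.sum_range_succ, hcardAk] at hsum
  have : Even (∑ c ∈ Finset.range k,
      (Finset.univ.filter (fun a : Fin n => f (Sum.inl a) = c)).card) :=
    Finset.even_sum _ heven'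
  rcases this with ⟨t, ht⟩
  rcases heven with ⟨u, hu⟩
  omega

/-- Construction (c): the case `n = m = k`. -/
lemma not_choos_c (k : ℕ) (hk : 1 ≤ k) : ¬ ProportionallyChoosable (KBip k k) k := by
  intro hch
  set L : Fin k ⊕ Fin k → Finset ℕ :=
    Sum.elim (fun _ => Finset.range k)
      (fun _ => insert 0 (Finset.Ico (k+1) (k+k))) with hL
  have hassign : IsKAssignment L k := by
    rintro (a | b)
    · simp [hL]
    · simp only [hL, Sum.elim_inr]
      rw [Finset.card_insert_of_notMem (by rw [Finset.mem_Ico]; omega), Nat.card_Ico]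
      omega
  obtain ⟨f, hf⟩ := hch L hassign
  have hproper := hf.1
  have hpalA : ∀ c < k, c ∈ palette L :=
    fun c hc => Finset.mem_biUnion.2 ⟨Sum.inl ⟨0, hk⟩, Finset.mem_univ _, by simp [hL, hc]⟩
  have hpalB : ∀ c ∈ Finset.Ico (k+1) (k+k), c ∈ palette L :=
    fun c hc => Finset.mem_biUnion.2 ⟨Sum.inr ⟨0, hk⟩, Finset.mem_univ _, by
      simp only [hL, Sum.elim_inr, Finset.mem_insert]; exact Or.inr hc⟩
  -- multiplicities
  have hmult0 : mult L 0 = 2 * k := by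
    unfold mult
    rw [card_filter_sumType]
    have hA : (Finset.univ.filter (fun a : Fin k => (0:ℕ) ∈ L (Sum.inl a))) = Finset.univ :=
      Finset.filter_true_of_mem (fun a _ => by simp only [hL, Sum.elim_inl, Finset.mem_range]; omega)
    have hB : (Finset.univ.filter (fun b : Fin k => (0:ℕ) ∈ L (Sum.inr b))) = Finset.univ :=
      Finset.filter_true_of_mem (fun b _ => by simp [hL])
    rw [hA, hB, Finset.card_univ, Fintype.card_fin]; omega
  have hmultA : ∀ c, 1 ≤ c → c < k → mult L c = k := by
    intro c h1 h2
    unfold mult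
    rw [card_filter_sumType]
    have hA : (Finset.univ.filter (fun a : Fin k => c ∈ L (Sum.inl a))) = Finset.univ :=
      Finset.filter_true_of_mem (fun a _ => by simp [hL, h2])
    have hB : (Finset.univ.filter (fun b : Fin k => c ∈ L (Sum.inr b))).card = 0 := by
      rw [Finset.card_eq_zero, Finset.filter_eq_empty_iff]
      intro b _
      simp only [hL, Sum.elim_inr, Finset.mem_insert, Finset.mem_Ico]
      omega
    rw [hA, hB, Finset.card_univ, Fintype.card_fin]
    omega
  have hmultB : ∀ c ∈ Finset.Ico (k+1) (k+k), mult L c = k := by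
    intro c hc
    rw [Finset.mem_Ico] at hc
    unfold mult
    rw [card_filter_sumType]
    have hA : (Finset.univ.filter (fun a : Fin k => c ∈ L (Sum.inl a))).card = 0 := by
      rw [Finset.card_eq_zero, Finset.filter_eq_empty_iff]
      intro a _
      simp only [hL, Sum.elim_inl, Finset.mem_range]
      omega
    have hB : (Finset.univ.filter (fun b : Fin k => c ∈ L (Sum.inr b))) = Finset.univ :=
      Finset.filter_true_of_mem (fun b _ => by
        simp only [hL, Sum.elim_inr, Finset.mem_insert, Finset.mem_Ico]; omega)
    rw [hA, hB, Finset.card_univ, Fintype.card_fin]; omega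
  -- A-side count
  have hA0 : (Finset.univ.filter (fun a : Fin k => f (Sum.inl a) = 0)).card = 1 := by
    have hsum : k = ∑ c ∈ Finset.range k,
        (Finset.univ.filter (fun a : Fin k => f (Sum.inl a) = c)).card := by
      have := Finset.card_eq_sum_card_fiberwise
        (f := fun a : Fin k => f (Sum.inl a)) (s := Finset.univ) (t := Finset.range k)
        (fun a _ => by simpa [hL] using hproper.1 (Sum.inl a))
      simpa using this
    rw [← Finset.add_sum_erase _ _ (Finset.mem_range.2 hk)] at hsum
    have hones : ∀ c ∈ (Finset.range k).erase 0,
        (Finset.univ.filter (fun a : Fin k => f (Sum.inl a) = c)).card = 1 := by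
      intro c hc
      rw [Finset.mem_erase, Finset.mem_range] at hc
      rw [cardA_eq_class hproper (fun b => by
        simp only [hL, Sum.elim_inr, Finset.mem_insert, Finset.mem_Ico]; omega)]
      exact class_card_one hk hf (hpalA c hc.2) (hmultA c (by omega) hc.2)
    rw [Finset.sum_congr rfl hones, Finset.sum_const, smul_eq_mul, mul_one,
      Finset.card_erase_of_mem (Finset.mem_range.2 hk), Finset.card_range] at hsum
    omega
  -- B-side count
  have hB0 : (Finset.univ.filter (fun b : Fin k => f (Sum.inr b) = 0)).card = 1 := by
    have hsum : k = ∑ c ∈ insert 0 (Finset.Ico (k+1) (k+k)),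
        (Finset.univ.filter (fun b : Fin k => f (Sum.inr b) = c)).card := by
      have := Finset.card_eq_sum_card_fiberwise
        (f := fun b : Fin k => f (Sum.inr b)) (s := Finset.univ)
        (t := insert 0 (Finset.Ico (k+1) (k+k)))
        (fun b _ => by simpa [hL] using hproper.1 (Sum.inr b))
      simpa using this
    rw [Finset.sum_insert (by rw [Finset.mem_Ico]; omega)] at hsum
    have hones : ∀ c ∈ Finset.Ico (k+1) (k+k),
        (Finset.univ.filter (fun b : Fin k => f (Sum.inr b) = c)).card = 1 := by
      intro c hc
      have hc' := Finset.mem_Ico.1 hc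
      rw [cardB_eq_class hproper (fun a => by
        simp only [hL, Sum.elim_inl, Finset.mem_range]; omega)]
      exact class_card_one hk hf (hpalB c hc) (hmultB c hc)
    rw [Finset.sum_congr rfl hones, Finset.sum_const, smul_eq_mul, mul_one,
      Nat.card_Ico] at hsum
    omega
  obtain ⟨a, ha⟩ := Finset.card_pos.1 (by omega : 0 <
    (Finset.univ.filter (fun a : Fin k => f (Sum.inl a) = 0)).card)
  obtain ⟨b, hb⟩ := Finset.card_pos.1 (by omega : 0 <
    (Finset.univ.filter (fun b : Fin k => f (Sum.inr b) = 0)).card)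
  rw [Finset.mem_filter] at ha hb
  exact hproper.2 (kbip_adj a b) (ha.2.trans hb.2.symm)

/-- The star-like construction: works whenever `2k ≤ m + 1`. -/
lemma not_choos_star (n m k : ℕ) (hn : 1 ≤ n) (hk : 1 ≤ k) (hm : 2*k ≤ m + 1) :
    ¬ ProportionallyChoosable (KBip n m) k := by
  intro hch
  set L : Fin n ⊕ Fin m → Finset ℕ :=
    Sum.elim
      (fun i => if (i : ℕ) = 0 then Finset.range k
        else Finset.Ico (((i : ℕ)+1)*k) (((i : ℕ)+1)*k + k))
      (fun _ => Finset.range k) with hL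
  have hassign : IsKAssignment L k := by
    rintro (a | b)
    · simp only [hL, Sum.elim_inl]
      split
      · simp
      · simp [Nat.card_Ico]
    · simp [hL]
  obtain ⟨f, hf⟩ := hch L hassign
  have hproper := hf.1
  set a0 : Fin n := ⟨0, hn⟩ with ha0
  have hL0 : L (Sum.inl a0) = Finset.range k := by simp [hL, ha0]
  set c0 := f (Sum.inl a0) with hc0
  have hc0k : c0 < k := by
    have := hproper.1 (Sum.inl a0)
    rw [hL0, Finset.mem_range] at this
    exact this
  have hpal : c0 ∈ palette L :=
    Finset.mem_biUnion.2 ⟨Sum.inl a0, Finset.mem_univ _, by rw [hL0, Finset.mem_range]; exact hc0k⟩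
  have hmult : mult L c0 = m + 1 := by
    unfold mult
    rw [card_filter_sumType]
    have hA : (Finset.univ.filter (fun a : Fin n => c0 ∈ L (Sum.inl a))).card = 1 := by
      have he : ∀ i : Fin n, (c0 ∈ L (Sum.inl i)) ↔ ((i:ℕ) = 0) := by
        intro i
        simp only [hL, Sum.elim_inl]
        by_cases hi : (i:ℕ) = 0
        · simp [hi, hc0k]
        · simp only [hi, if_false]
          have hkk : k ≤ ((i:ℕ)+1)*k := Nat.le_mul_of_pos_left k (by omega)
          rw [Finset.mem_Ico]
          constructor
          · rintro ⟨h1, h2⟩; exact absurd (hkk.trans h1) (by omega)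
          · exact False.elim
      rw [Finset.filter_congr (fun i _ => he i), card_filter_fin n (fun x => x = 0),
        range_filter_eq_card (by omega)]
    have hB : (Finset.univ.filter (fun b : Fin m => c0 ∈ L (Sum.inr b))) = Finset.univ :=
      Finset.filter_true_of_mem (fun b _ => by simp [hL, hc0k])
    rw [hA, hB, Finset.card_univ, Fintype.card_fin]
    omega
  have hclass : (Finset.univ.filter (fun v => f v = c0)).card = 1 := by
    have : (Finset.univ.filter (fun v : Fin n ⊕ Fin m => f v = c0)) = {Sum.inl a0} := by
      ext v
      rw [Finset.mem_filter, Finset.mem_singleton]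
      constructor
      · rintro ⟨-, hv⟩
        match v with
        | Sum.inl i =>
          by_cases hi : (i:ℕ) = 0
          · have : i = a0 := Fin.ext hi
            rw [this]
          · exfalso
            have hmem := hproper.1 (Sum.inl i)
            simp only [hL, Sum.elim_inl, hi, if_false] at hmem
            rw [hv] at hmem
            rw [Finset.mem_Ico] at hmem
            have hkk : k ≤ ((i:ℕ)+1)*k := Nat.le_mul_of_pos_left k (by omega)
            omega
        | Sum.inr b =>
          exfalso
          rw [hc0] at hv
          exact hproper.2 (kbip_adj a0 b) hv.symm
      · rintro rfl
        exact ⟨Finset.mem_univ _, rfl⟩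
    rw [this, Finset.card_singleton]
  rcases hf.2 c0 hpal with h | h <;> rw [hmult, hclass] at h
  · have : 2 ≤ (m+1)/k := (Nat.le_div_iff_mul_le (by omega)).2 (by omega)
    omega
  · have : 2 ≤ (m+1+k-1)/k := (Nat.le_div_iff_mul_le (by omega)).2 (by omega)
    omega

lemma not_choos_zero (n m : ℕ) (hn : 1 ≤ n) : ¬ ProportionallyChoosable (KBip n m) 0 := by
  intro hch
  obtain ⟨f, hf⟩ := hch (fun _ => ∅) (fun v => Finset.card_empty)
  exact absurd (hf.1.1 (Sum.inl ⟨0, hn⟩)) (Finset.notMem_empty _)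

lemma lower_bound (n m k : ℕ) (hn : 2 ≤ n) (hnm : n ≤ m)
    (h : ProportionallyChoosable (KBip n m) k) : n + 1 ≤ k ∧ 1 + (m+1)/2 ≤ k := by
  constructor
  · by_contra hlt
    push_neg at hlt
    have hkn : k ≤ n := by omega
    rcases Nat.eq_zero_or_pos k with rfl | hk
    · exact not_choos_zero n m (by omega) h
    by_cases hm2 : 2*k ≤ m + 1
    · exact not_choos_star n m k (by omega) hk hm2 h
    · push_neg at hm2
      rcases Nat.even_or_odd n with he | ho
      · by_cases hp : 2*k + 1 ≤ n + m
        · exact not_choos_d n m k hk hkn (by omega) hp he h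
        · have h1 : n = k := by omega
          have h2 : m = k := by omega
          rw [h1, h2] at h
          exact not_choos_c k (by omega) h
      · exact not_choos_a n m k hk ho (by omega) (by omega) h
  · by_contra hlt
    push_neg at hlt
    have hm2 : 2*k ≤ m + 1 := by omega
    rcases Nat.eq_zero_or_pos k with rfl | hk
    · exact not_choos_zero n m (by omega) h
    · exact not_choos_star n m k (by omega) hk hm2 h
lemma choosable_upper (n m : ℕ) (hn : 2 ≤ n) (hnm : n ≤ m) :
    ProportionallyChoosable (KBip n m) (n + m - 1) := by
  classical
  intro L hL
  set N := n + m with hN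
  have hN4 : 4 ≤ N := by omega
  have hcardV : Fintype.card (Fin n ⊕ Fin m) = N := by
    simp [hN]
  set P := palette L with hP
  have hLP : ∀ v, L v ⊆ P := fun v => Finset.subset_biUnion_of_mem L (Finset.mem_univ v)
  have hPc : N - 1 ≤ P.card := by
    calc N - 1 = (L (Sum.inl ⟨0, by omega⟩)).card := (hL _).symm
    _ ≤ P.card := Finset.card_le_card (hLP _)
  have hmulmem : ∀ c ∈ P, 1 ≤ mult L c := by
    intro c hc
    obtain ⟨v, -, hv⟩ := Finset.mem_biUnion.1 hc
    exact Finset.card_pos.2 ⟨v, Finset.mem_filter.2 ⟨Finset.mem_univ _, hv⟩⟩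
  have hmulN : ∀ c, mult L c ≤ N := by
    intro c
    calc mult L c ≤ Finset.univ.card := Finset.card_filter_le _ _
    _ = N := by rw [Finset.card_univ, hcardV]
  rcases Nat.lt_or_ge P.card N with hsmall | hbig
  · -- Case 1: the palette has exactly N - 1 colors, so all lists are equal.
    have h1 : P.card = N - 1 := by omega
    have hLall : ∀ v, L v = P := fun v =>
      Finset.eq_of_subset_of_card_le (hLP v) (by rw [hL v, h1])
    have hmultP : ∀ c ∈ P, mult L c = N := by
      intro c hc
      unfold mult
      rw [Finset.filter_true_of_mem (fun v _ => by rw [hLall v]; exact hc),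
        Finset.card_univ, hcardV]
    set e := P.orderIsoOfFin h1 with he
    set idx : Fin n ⊕ Fin m → ℕ := Sum.elim (fun i => (i : ℕ)) (fun j => n + (j : ℕ))
      with hidxdef
    have hidx : ∀ v, idx v < N := by
      rintro (i | j) <;> simp only [hidxdef, Sum.elim_inl, Sum.elim_inr] <;> omega
    set f : Fin n ⊕ Fin m → ℕ := fun v => (e ⟨idx v - 1, by have := hidx v; omega⟩ : ℕ)
      with hfdef
    have hfiff : ∀ v c (hc : c ∈ P),
        f v = c ↔ idx v - 1 = ((e.symm ⟨c, hc⟩ : Fin (N-1)) : ℕ) := by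
      intro v c hc
      constructor
      · intro h
        have : (⟨idx v - 1, by have := hidx v; omega⟩ : Fin (N-1)) = e.symm ⟨c, hc⟩ := by
          apply e.injective
          rw [OrderIso.apply_symm_apply]
          exact Subtype.ext h
        rw [← this]
      · intro h
        have : (⟨idx v - 1, by have := hidx v; omega⟩ : Fin (N-1)) = e.symm ⟨c, hc⟩ :=
          Fin.ext h
        simp only [hfdef, this, OrderIso.apply_symm_apply]
    refine ⟨f, ⟨⟨fun v => by rw [hLall v]; exact (e _).2, ?_⟩, ?_⟩⟩
    · -- proper
      rintro (a | b) (a' | b') hadj heq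
      · simp [completeBipartiteGraph] at hadj
      · have h1' : (a : ℕ) - 1 = (n + (b' : ℕ)) - 1 := by
          have := Fin.mk_eq_mk.1 (e.injective (Subtype.ext heq))
          simpa [hidxdef] using this
        have := a.isLt
        omega
      · have h1' : (n + (b : ℕ)) - 1 = (a' : ℕ) - 1 := by
          have := Fin.mk_eq_mk.1 (e.injective (Subtype.ext heq))
          simpa [hidxdef] using this
        have := a'.isLt
        omega
      · simp [completeBipartiteGraph] at hadj
    · -- counts
      intro c hc
      rw [hmultP c hc]
      set j := ((e.symm ⟨c, hc⟩ : Fin (N-1)) : ℕ) with hj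
      have hjlt : j < N - 1 := (e.symm ⟨c, hc⟩).isLt
      have hcongr : Finset.univ.filter (fun v => f v = c)
          = Finset.univ.filter (fun v => idx v - 1 = j) :=
        Finset.filter_congr (fun v _ => hfiff v c hc)
      rw [hcongr, card_filter_sumType (fun v : Fin n ⊕ Fin m => idx v - 1 = j)]
      have hAeq : (Finset.univ.filter (fun a : Fin n => idx (Sum.inl a) - 1 = j))
          = Finset.univ.filter (fun a : Fin n => (a : ℕ) - 1 = j) := by
        apply Finset.filter_congr; intro a _; simp [hidxdef]
      have hBeq : (Finset.univ.filter (fun b : Fin m => idx (Sum.inr b) - 1 = j))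
          = Finset.univ.filter (fun b : Fin m => (n + (b : ℕ)) - 1 = j) := by
        apply Finset.filter_congr; intro b _; simp [hidxdef]
      rw [hAeq, hBeq, card_filter_fin n (fun x => x - 1 = j),
        card_filter_fin m (fun x => (n + x) - 1 = j)]
      by_cases hj0 : j = 0
      · have hA : (Finset.range n).filter (fun x => x - 1 = j) = Finset.range 2 := by
          ext x
          simp only [Finset.mem_filter, Finset.mem_range]
          omega
        have hB : (Finset.range m).filter (fun x => (n + x) - 1 = j) = ∅ := by
          rw [Finset.filter_eq_empty_iff]
          intro x hx
          rw [Finset.mem_range] at hx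
          omega
        rw [hA, hB, Finset.card_range, Finset.card_empty]
        right
        exact (Nat.div_eq_of_lt_le (by omega) (by omega)).symm
      · have hcard1 : ((Finset.range n).filter (fun x => x - 1 = j)).card
            + ((Finset.range m).filter (fun x => (n + x) - 1 = j)).card = 1 := by
          by_cases hjn : j + 1 < n
          · have hA : (Finset.range n).filter (fun x => x - 1 = j) = {j + 1} := by
              ext x
              simp only [Finset.mem_filter, Finset.mem_range, Finset.mem_singleton]
              omega
            have hB : (Finset.range m).filter (fun x => (n + x) - 1 = j) = ∅ := by
              rw [Finset.filter_eq_empty_iff]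
              intro x hx
              rw [Finset.mem_range] at hx
              omega
            rw [hA, hB, Finset.card_singleton, Finset.card_empty]
          · have hA : (Finset.range n).filter (fun x => x - 1 = j) = ∅ := by
              rw [Finset.filter_eq_empty_iff]
              intro x hx
              rw [Finset.mem_range] at hx
              omega
            have hB : (Finset.range m).filter (fun x => (n + x) - 1 = j) = {j + 1 - n} := by
              ext x
              simp only [Finset.mem_filter, Finset.mem_range, Finset.mem_singleton]
              omega
            rw [hA, hB, Finset.card_singleton, Finset.card_empty]
        rw [hcard1]
        left
        exact (Nat.div_eq_of_lt_le (by omega) (by omega)).symm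
  · -- Case 2: the palette has at least N colors; use Hall's theorem.
    set S := P.filter (fun c => N - 1 ≤ mult L c) with hS
    have hSP : S ⊆ P := Finset.filter_subset _ _
    have F1 : ∑ c ∈ P, mult L c = N * (N - 1) := by
      calc ∑ c ∈ P, mult L c
          = ∑ c ∈ P, ∑ v : Fin n ⊕ Fin m, (if c ∈ L v then 1 else 0) :=
            Finset.sum_congr rfl (fun c _ => Finset.card_filter _ _)
        _ = ∑ v : Fin n ⊕ Fin m, ∑ c ∈ P, (if c ∈ L v then 1 else 0) := Finset.sum_comm
        _ = ∑ v : Fin n ⊕ Fin m, (P.filter (fun c => c ∈ L v)).card :=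
            Finset.sum_congr rfl (fun v _ => (Finset.card_filter _ _).symm)
        _ = ∑ _v : Fin n ⊕ Fin m, (N - 1) := by
            refine Finset.sum_congr rfl (fun v _ => ?_)
            rw [Finset.filter_mem_eq_inter, Finset.inter_eq_right.2 (hLP v), hL v]
        _ = N * (N - 1) := by
            rw [Finset.sum_const, Finset.card_univ, hcardV, smul_eq_mul]
    have F3 : N + 1 ≤ P.card → S.card ≤ N - 1 := by
      intro hp1
      by_contra hcon
      push_neg at hcon
      have ha : N ≤ S.card := by omega
      have hsum1 : ∑ c ∈ S, mult L c + ∑ c ∈ P.filter (fun c => ¬ (N - 1 ≤ mult L c)),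
          mult L c = ∑ c ∈ P, mult L c :=
        Finset.sum_filter_add_sum_filter_not P _ _
      have hb1 : S.card * (N - 1) ≤ ∑ c ∈ S, mult L c := by
        have := Finset.card_nsmul_le_sum S (mult L) (N - 1)
          (fun c hc => (Finset.mem_filter.1 hc).2)
        simpa [smul_eq_mul] using this
      have hb2 : (P.card - S.card) * 1 ≤ ∑ c ∈ P.filter (fun c => ¬ (N - 1 ≤ mult L c)),
          mult L c := by
        have hcard : (P.filter (fun c => ¬ (N - 1 ≤ mult L c))).card = P.card - S.card := by
          have := Finset.card_filter_add_card_filter_not (s := P)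
            (p := fun c => N - 1 ≤ mult L c)
          rw [← hS] at this
          omega
        have := Finset.card_nsmul_le_sum (P.filter (fun c => ¬ (N - 1 ≤ mult L c)))
          (mult L) 1 (fun c hc => hmulmem c (Finset.mem_filter.1 hc).1)
        rw [hcard] at this
        simpa [smul_eq_mul] using this
      have hsle : S.card ≤ P.card := Finset.card_le_card hSP
      have hNa : N * (N - 1) ≤ S.card * (N - 1) := Nat.mul_le_mul_right _ ha
      have hap : S.card = P.card := by omega
      have hN1a : (N + 1) * (N - 1) ≤ S.card * (N - 1) :=
        Nat.mul_le_mul_right _ (by omega)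
      rw [Nat.succ_mul] at hN1a
      omega
    have F4 : ∀ c ∈ S, ∀ v w : Fin n ⊕ Fin m, v ≠ w → c ∈ L v ∨ c ∈ L w := by
      intro c hc v w hvw
      by_contra hcon
      push_neg at hcon
      have hsub : {v, w} ⊆ Finset.univ.filter (fun u => ¬ (c ∈ L u)) := by
        intro u hu
        rcases Finset.mem_insert.1 hu with rfl | hu
        · exact Finset.mem_filter.2 ⟨Finset.mem_univ _, hcon.1⟩
        · rw [Finset.mem_singleton] at hu
          subst hu
          exact Finset.mem_filter.2 ⟨Finset.mem_univ _, hcon.2⟩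
      have h2 : 2 ≤ (Finset.univ.filter (fun u => ¬ (c ∈ L u))).card := by
        calc 2 = ({v, w} : Finset (Fin n ⊕ Fin m)).card := (Finset.card_pair hvw).symm
        _ ≤ _ := Finset.card_le_card hsub
      have := Finset.card_filter_add_card_filter_not (s := (Finset.univ : Finset (Fin n ⊕ Fin m)))
        (p := fun u => c ∈ L u)
      have hcS : N - 1 ≤ mult L c := (Finset.mem_filter.1 hc).2
      unfold mult at hcS
      rw [Finset.card_univ, hcardV] at this
      omega
    set d := P.card - N with hd
    set t : (Fin n ⊕ Fin m) ⊕ Fin d → Finset ℕ := Sum.elim L (fun _ => P \ S) with ht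
    have hall : ∀ s : Finset ((Fin n ⊕ Fin m) ⊕ Fin d), s.card ≤ (s.biUnion t).card := by
      intro s
      have hcards : s.toLeft.card + s.toRight.card = s.card :=
        Finset.card_toLeft_add_card_toRight
      have hsubV : ∀ v ∈ s.toLeft, L v ⊆ s.biUnion t := by
        intro v hv c hc
        exact Finset.mem_biUnion.2 ⟨Sum.inl v, Finset.mem_toLeft.1 hv, hc⟩
      have hVuniv : s.toLeft.card ≤ N := by
        calc s.toLeft.card ≤ Finset.univ.card := Finset.card_le_univ _
        _ = N := by rw [Finset.card_univ, hcardV]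
      rcases Finset.eq_empty_or_nonempty s.toRight with hD | ⟨x, hx⟩
      · have hsV : s.card = s.toLeft.card := by rw [← hcards, hD]; simp
        rcases Finset.eq_empty_or_nonempty s.toLeft with hV | ⟨v, hv⟩
        · simp [hsV, hV]
        · by_cases hVsmall : s.toLeft.card ≤ N - 1
          · calc s.card = s.toLeft.card := hsV
            _ ≤ N - 1 := hVsmall
            _ = (L v).card := (hL v).symm
            _ ≤ (s.biUnion t).card := Finset.card_le_card (hsubV v hv)
          · have hVeq : s.toLeft = Finset.univ := by
              apply Finset.eq_univ_of_card
              rw [hcardV]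
              omega
            have hPsub : P ⊆ s.biUnion t := by
              intro c hc
              obtain ⟨v0, -, hv0⟩ := Finset.mem_biUnion.1 hc
              exact hsubV v0 (hVeq ▸ Finset.mem_univ v0) hv0
            calc s.card = s.toLeft.card := hsV
            _ ≤ N := hVuniv
            _ ≤ P.card := hbig
            _ ≤ (s.biUnion t).card := Finset.card_le_card hPsub
      · have hd1 : 1 ≤ d := x.pos
        have hSN : S.card ≤ N - 1 := F3 (by omega)
        have hPS : (P \ S) ⊆ s.biUnion t := by
          intro c hc
          exact Finset.mem_biUnion.2 ⟨Sum.inr x, Finset.mem_toRight.1 hx, hc⟩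
        have hDcard : s.toRight.card ≤ d := by
          calc s.toRight.card ≤ Finset.univ.card := Finset.card_le_univ _
          _ = d := by rw [Finset.card_univ, Fintype.card_fin]
        have hPSc : (P \ S).card = P.card - S.card := Finset.card_sdiff_of_subset hSP
        by_cases hw : s.toLeft.card ≤ N - S.card
        · have := Finset.card_le_card hPS
          omega
        · obtain ⟨v, hv, w, hw', hvw⟩ := Finset.one_lt_card.1
            (by omega : 1 < s.toLeft.card)
          have hPsub : P ⊆ s.biUnion t := by
            intro c hc
            by_cases hcS : c ∈ S
            · rcases F4 c hcS v w hvw with h | h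
              · exact hsubV v hv h
              · exact hsubV w hw' h
            · exact hPS (Finset.mem_sdiff.2 ⟨hc, hcS⟩)
          have := Finset.card_le_card hPsub
          omega
    obtain ⟨F, hFinj, hFmem⟩ := (Finset.all_card_le_biUnion_card_iff_exists_injective t).1 hall
    set f : Fin n ⊕ Fin m → ℕ := fun v => F (Sum.inl v) with hf
    have hfLmem : ∀ v, f v ∈ L v := fun v => hFmem (Sum.inl v)
    have himg : Finset.univ.image F = P := by
      apply Finset.eq_of_subset_of_card_le
      · intro c hc
        obtain ⟨x, -, hxc⟩ := Finset.mem_image.1 hc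
        have := hFmem x
        rw [hxc] at this
        match x with
        | Sum.inl v => exact hLP v this
        | Sum.inr i => exact Finset.sdiff_subset this
      · rw [Finset.card_image_of_injective _ hFinj, Finset.card_univ, Fintype.card_sum,
          hcardV, Fintype.card_fin]
        omega
    have hcover : ∀ c ∈ S, ∃ v, f v = c := by
      intro c hc
      have hcP : c ∈ Finset.univ.image F := himg ▸ hSP hc
      obtain ⟨x, -, hxc⟩ := Finset.mem_image.1 hcP
      match x with
      | Sum.inl v => exact ⟨v, hxc⟩
      | Sum.inr i =>
        have := hFmem (Sum.inr i)
        rw [hxc] at this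
        exact absurd hc (Finset.mem_sdiff.1 this).2
    have hfinj : Function.Injective f := fun u w h => Sum.inl_injective (hFinj h)
    refine ⟨f, ⟨⟨hfLmem, fun u w hadj heq => hadj.ne (hfinj heq)⟩, ?_⟩⟩
    intro c hc
    have hclassle : (Finset.univ.filter (fun v => f v = c)).card ≤ 1 :=
      Finset.card_le_one.2 (fun u hu w hw => hfinj
        ((Finset.mem_filter.1 hu).2.trans (Finset.mem_filter.1 hw).2.symm))
    have hmu1 : 1 ≤ mult L c := hmulmem c hc
    have hmuN : mult L c ≤ N := hmulN c
    by_cases hcS : N - 1 ≤ mult L c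
    · obtain ⟨v, hv⟩ := hcover c (Finset.mem_filter.2 ⟨hc, hcS⟩)
      have h1 : (Finset.univ.filter (fun v => f v = c)).card = 1 := by
        have : 1 ≤ (Finset.univ.filter (fun v => f v = c)).card :=
          Finset.card_pos.2 ⟨v, Finset.mem_filter.2 ⟨Finset.mem_univ _, hv⟩⟩
        omega
      rw [h1]
      by_cases hmN : mult L c ≤ N - 1
      · right
        exact (Nat.div_eq_of_lt_le (by omega) (by omega)).symm
      · left
        exact (Nat.div_eq_of_lt_le (by omega) (by omega)).symm
    · rcases Nat.le_one_iff_eq_zero_or_eq_one.1 hclassle with h0 | h1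
      · rw [h0]
        left
        exact (Nat.div_eq_of_lt (by omega)).symm
      · rw [h1]
        right
        exact (Nat.div_eq_of_lt_le (by omega) (by omega)).symm

/-- For `2 ≤ n ≤ m`,
`max {n+1, 1 + ⌈m/2⌉} ≤ χ_pc(K_{n,m}) ≤ n + m - 1`. -/
theorem stmt14 (n m : ℕ) (hn : 2 ≤ n) (hnm : n ≤ m) :
    max (n + 1) (1 + (m + 1) / 2) ≤ propChoiceNumber (KBip n m) ∧
      propChoiceNumber (KBip n m) ≤ n + m - 1 := by
  have hup : ProportionallyChoosable (KBip n m) (n + m - 1) := choosable_upper n m hn hnm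
  have hne : {k | ProportionallyChoosable (KBip n m) k}.Nonempty := ⟨n + m - 1, hup⟩
  constructor
  · apply le_csInf hne
    intro k hk
    have h := lower_bound n m k hn hnm hk
    exact max_le h.1 h.2
  · exact Nat.sInf_le hup
end

section
/- For every non-complete graph G on at least 2 vertices, χ_pc(G) ≤ |V(G)| − 1. -/
open Finset SimpleGraph

section Aux
variable {V : Type*} [Fintype V]

lemma mem_palette {L : V → Finset ℕ} {c : ℕ} : c ∈ palette L ↔ ∃ v, c ∈ L v := by
  simp [palette]

lemma subset_palette (L : V → Finset ℕ) (v : V) : L v ⊆ palette L :=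
  fun c hc => mem_palette.2 ⟨v, hc⟩

lemma sum_mult (L : V → Finset ℕ) : ∑ c ∈ palette L, mult L c = ∑ v, (L v).card := by
  classical
  unfold mult
  simp_rw [Finset.card_filter]
  rw [Finset.sum_comm]
  refine Finset.sum_congr rfl fun v _ => ?_
  rw [← Finset.card_filter, Finset.filter_mem_eq_inter,
    Finset.inter_eq_right.2 (subset_palette L v)]

lemma mult_le (L : V → Finset ℕ) (c : ℕ) : mult L c ≤ Fintype.card V := by
  unfold mult
  exact (Finset.card_filter_le _ _).trans (le_of_eq Finset.card_univ)

lemma one_le_mult {L : V → Finset ℕ} {c : ℕ} (hc : c ∈ palette L) : 1 ≤ mult L c := by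
  obtain ⟨v, hv⟩ := mem_palette.1 hc
  exact Finset.card_pos.2 ⟨v, by simp [hv]⟩

lemma fiber_eq_singleton {f : V → ℕ} (hf : Function.Injective f) (w : V) :
    Finset.univ.filter (fun v => f v = f w) = {w} := by
  ext x; simp [hf.eq_iff]

lemma my_div_one {m k : ℕ} (hk : 0 < k) (h1 : k ≤ m) (h2 : m < 2 * k) : m / k = 1 := by
  have h3 : 1 ≤ m / k := (Nat.le_div_iff_mul_le hk).2 (by omega)
  have h4 : m / k < 2 := (Nat.div_lt_iff_lt_mul hk).2 (by omega)
  omega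

end Aux

/-- Every non-complete graph `G` on at least two vertices satisfies
`χ_pc(G) ≤ |V(G)| - 1`. -/
theorem stmt15 {V : Type*} [Fintype V] (G : SimpleGraph V)
    (hcard : 2 ≤ Fintype.card V)
    (hnoncomplete : ∃ u v : V, u ≠ v ∧ ¬ G.Adj u v) :
    propChoiceNumber G ≤ Fintype.card V - 1 := by
  classical
  obtain ⟨u, v, huv, hadj⟩ := hnoncomplete
  apply Nat.sInf_le
  show ProportionallyChoosable G (Fintype.card V - 1)
  intro L hL
  set n := Fintype.card V with hn
  set k := n - 1 with hk
  have hk0 : 0 < k := by omega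
  have hkn : k + 1 = n := by omega
  have hsum : ∑ c ∈ palette L, mult L c = n * k := by
    rw [sum_mult, Finset.sum_congr rfl fun v _ => hL v, Finset.sum_const,
      Finset.card_univ, smul_eq_mul, ← hn]
  by_cases hPcase : (palette L).card ≤ k
  · -- Case 1: small palette, all lists equal the palette
    have hLP : ∀ x, L x = palette L := fun x =>
      Finset.eq_of_subset_of_card_le (subset_palette L x) (by rw [hL x]; exact hPcase)
    have hPcard : (palette L).card = k := by rw [← hLP u]; exact hL u
    have hmultn : ∀ c ∈ palette L, mult L c = n := by
      intro c hc
      unfold mult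
      rw [Finset.filter_true_of_mem fun x _ => by rw [hLP x]; exact hc,
        Finset.card_univ, ← hn]
    have hScard : Fintype.card {x : V // x ≠ v} = k := by
      rw [hk, hn]
      simp [Fintype.card_subtype_compl]
    obtain ⟨f0, hf0inj, hf0mem⟩ : ∃ f0 : {x : V // x ≠ v} → ℕ,
        Function.Injective f0 ∧ ∀ x, f0 x ∈ palette L := by
      rw [← Finset.all_card_le_biUnion_card_iff_exists_injective
        (fun _ : {x : V // x ≠ v} => palette L)]
      intro s
      rcases s.eq_empty_or_nonempty with rfl | ⟨x, hx⟩
      · simp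
      · have h1 : palette L ⊆ s.biUnion (fun _ => palette L) := fun c hc =>
          Finset.mem_biUnion.2 ⟨x, hx, hc⟩
        calc s.card ≤ Fintype.card {x : V // x ≠ v} := s.card_le_univ.trans_eq Finset.card_univ
          _ = (palette L).card := by rw [hScard, hPcard]
          _ ≤ _ := Finset.card_le_card h1
    set u' : {x : V // x ≠ v} := ⟨u, huv⟩ with hu'
    set f : V → ℕ := fun x => if h : x = v then f0 u' else f0 ⟨x, h⟩ with hf
    have hfv : f v = f0 u' := by simp [hf]
    have hfx : ∀ (x : V) (h : x ≠ v), f x = f0 ⟨x, h⟩ := by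
      intro x h; simp [hf, h]
    refine ⟨f, ⟨⟨fun x => ?_, fun a b hab hfab => ?_⟩, fun c hc => ?_⟩⟩
    · rw [hLP x]
      by_cases h : x = v
      · rw [h, hfv]; exact hf0mem u'
      · rw [hfx x h]; exact hf0mem _
    · by_cases ha : a = v
      · by_cases hb : b = v
        · exact hab.ne (ha.trans hb.symm)
        · rw [ha, hfv, hfx b hb] at hfab
          have : u' = ⟨b, hb⟩ := hf0inj hfab
          have hbu : b = u := by
            have := congrArg Subtype.val this; simpa [hu'] using this.symm
          exact hadj (by rw [← hbu, ← ha]; exact hab.symm)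
      · by_cases hb : b = v
        · rw [hb, hfv, hfx a ha] at hfab
          have : ⟨a, ha⟩ = u' := hf0inj hfab
          have hau : a = u := by
            have := congrArg Subtype.val this; simpa [hu'] using this
          exact hadj (by rw [← hau, ← hb]; exact hab)
        · rw [hfx a ha, hfx b hb] at hfab
          have : (⟨a, ha⟩ : {x : V // x ≠ v}) = ⟨b, hb⟩ := hf0inj hfab
          exact hab.ne (congrArg Subtype.val this)
    · -- counts
      have himg : Finset.univ.image f0 = palette L := by
        refine Finset.eq_of_subset_of_card_le (fun c hc => ?_) ?_
        · obtain ⟨x, _, rfl⟩ := Finset.mem_image.1 hc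
          exact hf0mem x
        · rw [Finset.card_image_of_injective _ hf0inj, Finset.card_univ, hScard, hPcard]
      obtain ⟨w, _, hwc⟩ := Finset.mem_image.1 (himg ▸ hc)
      by_cases hw : w = u'
      · -- color used twice, on u and v
        have hfilter : Finset.univ.filter (fun x => f x = c) = {u, v} := by
          ext x
          simp only [Finset.mem_filter, Finset.mem_univ, true_and, Finset.mem_insert,
            Finset.mem_singleton]
          constructor
          · intro hxc
            by_cases hx : x = v
            · exact Or.inr hx
            · rw [hfx x hx] at hxc
              have : (⟨x, hx⟩ : {y : V // y ≠ v}) = u' := hf0inj (by rw [hxc, ← hwc, hw])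
              exact Or.inl (congrArg Subtype.val this)
          · rintro (rfl | rfl)
            · rw [hfx x huv, ← hwc, hw]
            · rw [hfv, ← hwc, hw]
        right
        rw [hfilter, Finset.card_insert_of_notMem (by simp [huv]), Finset.card_singleton]
        have h2k : mult L c + k - 1 = 2 * k := by
          have := hmultn c hc; omega
        rw [h2k, Nat.mul_div_cancel _ hk0]
      · -- color used once
        have hwu : (w : V) ≠ u := fun h => hw (Subtype.ext h)
        have hfilter : Finset.univ.filter (fun x => f x = c) = {(w : V)} := by
          ext x
          simp only [Finset.mem_filter, Finset.mem_univ, true_and, Finset.mem_singleton]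
          constructor
          · intro hxc
            by_cases hx : x = v
            · rw [hx, hfv, ← hwc] at hxc
              exact absurd (hf0inj hxc.symm) hw
            · rw [hfx x hx, ← hwc] at hxc
              exact congrArg Subtype.val (hf0inj hxc)
          · rintro rfl
            rw [hfx _ w.2, ← hwc]
        have hk2 : 2 ≤ k := by
          by_contra hcon
          have hk1' : (palette L).card ≤ 1 := by omega
          have : c = f0 u' :=
            Finset.card_le_one.1 hk1' c hc (f0 u') (hf0mem u')
          exact hw (hf0inj (hwc.trans this))
        left
        rw [hfilter, Finset.card_singleton, hmultn c hc,
          my_div_one hk0 (by omega) (by omega)]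
  · -- Case 2: big palette, rainbow coloring via Hall
    have hPn : n ≤ (palette L).card := by omega
    set P := palette L with hPdef
    set H := P.filter (fun c => k ≤ mult L c) with hHdef
    have hHP : H ⊆ P := Finset.filter_subset _ _
    have hHn : H.card ≤ n := by
      have h1 : H.card * k ≤ ∑ c ∈ H, mult L c := by
        calc H.card * k = ∑ _c ∈ H, k := by rw [Finset.sum_const, smul_eq_mul]
          _ ≤ ∑ c ∈ H, mult L c := Finset.sum_le_sum fun c hc => (Finset.mem_filter.1 hc).2
      have h2 : ∑ c ∈ H, mult L c ≤ n * k := hsum ▸ Finset.sum_le_sum_of_subset hHP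
      exact Nat.le_of_mul_le_mul_right (h1.trans h2) hk0
    set d := P.card - n with hd
    have heavy : ∀ c ∈ H, ∀ A : Finset V, 2 ≤ A.card → ∃ a ∈ A, c ∈ L a := by
      intro c hc A hA
      by_contra hcon
      push_neg at hcon
      have hsubset : A ⊆ Finset.univ.filter (fun x => ¬ c ∈ L x) := fun a ha =>
        Finset.mem_filter.2 ⟨Finset.mem_univ a, hcon a ha⟩
      have h1 := Finset.card_filter_add_card_filter_not
        (s := (Finset.univ : Finset V)) (p := fun x => c ∈ L x)
      have hck : k ≤ mult L c := (Finset.mem_filter.1 hc).2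
      have h2 := Finset.card_le_card hsubset
      unfold mult at hck
      rw [Finset.card_univ, ← hn] at h1
      omega
    have hHLa : ∀ a : V, (H \ L a).card ≤ k := by
      intro a
      by_contra hcon
      push_neg at hcon
      have h1 : (H \ L a).card ≤ H.card := Finset.card_le_card Finset.sdiff_subset
      have h2 : H \ L a = H := Finset.eq_of_subset_of_card_le Finset.sdiff_subset (by omega)
      have hHcard : H.card = n := by omega
      have h3 : n * k ≤ ∑ c ∈ H, mult L c := by
        calc n * k = H.card * k := by rw [hHcard]
          _ = ∑ _c ∈ H, k := by rw [Finset.sum_const, smul_eq_mul]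
          _ ≤ _ := Finset.sum_le_sum fun c hc => (Finset.mem_filter.1 hc).2
      have h4 : ∑ c ∈ P \ H, mult L c + ∑ c ∈ H, mult L c = ∑ c ∈ P, mult L c :=
        Finset.sum_sdiff hHP
      have h6 : ∑ c ∈ H, mult L c ≤ ∑ c ∈ P, mult L c := Finset.sum_le_sum_of_subset hHP
      have h5 : ∑ c ∈ P \ H, mult L c = 0 := by omega
      obtain ⟨c0, hc0⟩ : (L a).Nonempty := Finset.card_pos.1 (by rw [hL a]; omega)
      have hc0P : c0 ∈ P := subset_palette L a hc0
      have hc0H : c0 ∉ H := fun hmem => (Finset.mem_sdiff.1 (h2.symm ▸ hmem)).2 hc0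
      have h7 : mult L c0 = 0 :=
        Finset.sum_eq_zero_iff.1 h5 c0 (Finset.mem_sdiff.2 ⟨hc0P, hc0H⟩)
      have h8 : 1 ≤ mult L c0 := one_le_mult hc0P
      omega
    obtain ⟨F, hFinj, hFmem⟩ : ∃ F : V ⊕ Fin d → ℕ, Function.Injective F ∧
        ∀ x, F x ∈ Sum.elim L (fun _ => P \ H) x := by
      rw [← Finset.all_card_le_biUnion_card_iff_exists_injective]
      intro s
      set A := s.toLeft with hA
      set B := s.toRight with hB
      have hcardAB : A.card + B.card = s.card := Finset.card_toLeft_add_card_toRight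
      have hAsub : ∀ a ∈ A, L a ⊆ s.biUnion (Sum.elim L fun _ => P \ H) := by
        intro a ha c hc
        exact Finset.mem_biUnion.2 ⟨Sum.inl a, Finset.mem_toLeft.1 ha, hc⟩
      have hBsub : B.Nonempty → P \ H ⊆ s.biUnion (Sum.elim L fun _ => P \ H) := by
        rintro ⟨i, hi⟩ c hc
        exact Finset.mem_biUnion.2 ⟨Sum.inr i, Finset.mem_toRight.1 hi, hc⟩
      have hBd : B.card ≤ d := by
        calc B.card ≤ Fintype.card (Fin d) := B.card_le_univ.trans_eq Finset.card_univ
          _ = d := Fintype.card_fin d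
      have hAn : A.card ≤ n := by
        calc A.card ≤ Fintype.card V := A.card_le_univ.trans_eq Finset.card_univ
          _ = n := hn.symm
      have hPHcard : (P \ H).card = P.card - H.card := Finset.card_sdiff_of_subset hHP
      rcases B.eq_empty_or_nonempty with hBe | hBne
      · rcases A.eq_empty_or_nonempty with hAe | ⟨a, ha⟩
        · have h0 : s.card = 0 := by rw [← hcardAB, hAe, hBe]; simp
          rw [h0]; exact Nat.zero_le _
        · by_cases hAk : A.card ≤ k
          · have hBe0 : B.card = 0 := by rw [hBe]; simp
            calc s.card = A.card := by omega
              _ ≤ (L a).card := by rw [hL a]; exact hAk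
              _ ≤ _ := Finset.card_le_card (hAsub a ha)
          · have hAu : A = Finset.univ :=
              Finset.eq_univ_of_card A (by rw [← hn]; omega)
            have hPs : P ⊆ s.biUnion (Sum.elim L fun _ => P \ H) := by
              intro c hc
              obtain ⟨x, hx⟩ := mem_palette.1 hc
              exact hAsub x (hAu ▸ Finset.mem_univ x) hx
            have hBe0 : B.card = 0 := by rw [hBe]; simp
            calc s.card = A.card := by omega
              _ ≤ n := hAn
              _ ≤ P.card := hPn
              _ ≤ _ := Finset.card_le_card hPs
      · rcases A.eq_empty_or_nonempty with hAe | ⟨a, ha⟩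
        · have hAe0 : A.card = 0 := by rw [hAe]; simp
          calc s.card = B.card := by omega
            _ ≤ d := hBd
            _ ≤ (P \ H).card := by omega
            _ ≤ _ := Finset.card_le_card (hBsub hBne)
        · by_cases hA2 : 2 ≤ A.card
          · have hPs : P ⊆ s.biUnion (Sum.elim L fun _ => P \ H) := by
              intro c hc
              by_cases hcH : c ∈ H
              · obtain ⟨a', ha', hca'⟩ := heavy c hcH A hA2
                exact hAsub a' ha' hca'
              · exact hBsub hBne (Finset.mem_sdiff.2 ⟨hc, hcH⟩)
            calc s.card = A.card + B.card := hcardAB.symm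
              _ ≤ n + d := by omega
              _ ≤ P.card := by omega
              _ ≤ _ := Finset.card_le_card hPs
          · have hA1 : A.card = 1 := by
              have := Finset.card_pos.2 ⟨a, ha⟩
              omega
            have hsub2 : (P \ H) ∪ (H ∩ L a) ⊆ s.biUnion (Sum.elim L fun _ => P \ H) := by
              apply Finset.union_subset (hBsub hBne)
              intro c hc
              exact hAsub a ha (Finset.mem_inter.1 hc).2
            have hdisj : Disjoint (P \ H) (H ∩ L a) :=
              Finset.sdiff_disjoint.mono_right Finset.inter_subset_left
            have hIH : (H ∩ L a).card + (H \ L a).card = H.card :=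
              Finset.card_inter_add_card_sdiff H (L a)
            have hcu := Finset.card_union_of_disjoint hdisj
            have hHa := hHLa a
            calc s.card = A.card + B.card := hcardAB.symm
              _ ≤ ((P \ H) ∪ (H ∩ L a)).card := by rw [hcu]; omega
              _ ≤ _ := Finset.card_le_card hsub2
    set f : V → ℕ := fun w => F (Sum.inl w) with hfdef
    have hfinj : Function.Injective f := fun a b h => Sum.inl.inj (hFinj h)
    have hfL : ∀ w, f w ∈ L w := fun w => hFmem (Sum.inl w)
    have hcardι : Fintype.card (V ⊕ Fin d) = P.card := by
      rw [Fintype.card_sum, Fintype.card_fin, ← hn]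
      omega
    have himg : Finset.univ.image F = P := by
      refine Finset.eq_of_subset_of_card_le (fun c hc => ?_) ?_
      · obtain ⟨x, _, rfl⟩ := Finset.mem_image.1 hc
        cases x with
        | inl w => exact subset_palette L w (hFmem (Sum.inl w))
        | inr i => exact (Finset.mem_sdiff.1 (hFmem (Sum.inr i))).1
      · rw [Finset.card_image_of_injective _ hFinj, Finset.card_univ, hcardι]
    have hHrange : ∀ c ∈ H, ∃ w, f w = c := by
      intro c hc
      obtain ⟨x, _, hx⟩ := Finset.mem_image.1 (himg.symm ▸ hHP hc)
      cases x with
      | inl w => exact ⟨w, hx⟩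
      | inr i => exact absurd hc (hx ▸ (Finset.mem_sdiff.1 (hFmem (Sum.inr i))).2)
    refine ⟨f, ⟨⟨hfL, fun a b hab h => hab.ne (hfinj h)⟩, fun c hc => ?_⟩⟩
    have hcm : mult L c ≤ n := by
      have := mult_le L c
      omega
    have h1m : 1 ≤ mult L c := one_le_mult hc
    by_cases hcH : c ∈ H
    · have hck : k ≤ mult L c := (Finset.mem_filter.1 hcH).2
      obtain ⟨w, rfl⟩ := hHrange c hcH
      rw [fiber_eq_singleton hfinj w, Finset.card_singleton]
      by_cases hce : mult L (f w) = k
      · left; rw [hce, Nat.div_self hk0]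
      · have hmn : mult L (f w) = k + 1 := by omega
        have hk2 : 2 ≤ k := by
          by_contra hcon
          have hk1' : k = 1 := by omega
          have hallx : Finset.univ.filter (fun x => f w ∈ L x) = Finset.univ := by
            apply Finset.eq_univ_of_card
            unfold mult at hmn
            rw [← hn]
            omega
          have hLsing : ∀ x : V, L x = {f w} := by
            intro x
            have hcx : f w ∈ L x := by
              have hx := Finset.mem_univ x
              rw [← hallx] at hx
              exact (Finset.mem_filter.1 hx).2
            have h1 : (L x).card = 1 := by rw [hL x, hk1']
            obtain ⟨z, hz⟩ := Finset.card_eq_one.1 h1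
            rw [hz] at hcx ⊢
            rw [Finset.mem_singleton.1 hcx]
          have hPsub : P ⊆ {f w} := by
            intro c' hc'
            obtain ⟨x, hx⟩ := mem_palette.1 hc'
            rw [hLsing x] at hx
            exact hx
          have hle := Finset.card_le_card hPsub
          rw [Finset.card_singleton] at hle
          omega
        left
        rw [hmn, my_div_one hk0 (by omega) (by omega)]
    · have hlt : mult L c < k := by
        by_contra hcon
        exact hcH (Finset.mem_filter.2 ⟨hc, by omega⟩)
      by_cases hcr : ∃ w, f w = c
      · obtain ⟨w, rfl⟩ := hcr
        rw [fiber_eq_singleton hfinj w, Finset.card_singleton]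
        right
        rw [my_div_one hk0 (by omega) (by omega)]
      · left
        push_neg at hcr
        have hemp : Finset.univ.filter (fun x => f x = c) = ∅ := by
          ext x; simp [hcr x]
        rw [hemp, Finset.card_empty, Nat.div_eq_of_lt hlt]
end

section
/- For every m ≥ 1, χ_pc(K_{m,m}) > m; i.e., the complete bipartite graph K_{m,m} is not proportionally m-choosable. -/
open Finset SimpleGraph

/- ### Auxiliary lemmas -/

lemma filter_sum_card' {m : ℕ} (p : Fin m ⊕ Fin m → Prop) [DecidablePred p] :
    ((univ : Finset (Fin m ⊕ Fin m)).filter p).card =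
      ((univ : Finset (Fin m)).filter (fun i => p (Sum.inl i))).card +
      ((univ : Finset (Fin m)).filter (fun j => p (Sum.inr j))).card := by
  rw [← Finset.card_disjSum]
  congr 1
  rw [← Finset.univ_disjSum_univ]
  ext x
  cases x <;> simp [Finset.mem_disjSum]

lemma card_filter_fin_lt' (m k : ℕ) (h : k ≤ m) :
    ((univ : Finset (Fin m)).filter (fun i : Fin m => (i:ℕ) < k)).card = k := by
  rw [← Finset.card_range k]
  refine Finset.card_bij (fun (i : Fin m) _ => (i:ℕ)) ?_ ?_ ?_
  · intro a ha; simp at ha ⊢; omega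
  · intro a ha b hb hab; exact Fin.ext hab
  · intro b hb; simp at hb; exact ⟨⟨b, by omega⟩, by simp [hb], rfl⟩

lemma adj_lr (m : ℕ) (i j : Fin m) : (KBip m m).Adj (Sum.inl i) (Sum.inr j) :=
  Or.inl ⟨rfl, rfl⟩

lemma adj_rl (m : ℕ) (i j : Fin m) : (KBip m m).Adj (Sum.inr j) (Sum.inl i) :=
  Or.inr ⟨rfl, rfl⟩

/-- For `k ≤ m`, `K_{m,m}` is not proportionally `k`-choosable. -/
lemma notPC (m k : ℕ) (hm : 1 ≤ m) (hk : k ≤ m) :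
    ¬ ProportionallyChoosable (KBip m m) k := by
  intro hPC
  set L : Fin m ⊕ Fin m → Finset ℕ :=
    Sum.elim
      (fun i => if (i:ℕ) < k then Finset.range k
        else Finset.Ico (2*m + (i:ℕ)*k) (2*m + (i:ℕ)*k + k))
      (fun j => if (j:ℕ) < k then insert 0 (Finset.Ico k (2*k-1))
        else Finset.Ico (2*m + (m+(j:ℕ))*k) (2*m + (m+(j:ℕ))*k + k)) with hLdef
  have hassign : IsKAssignment L k := by
    rintro (i | j)
    · simp only [hLdef, Sum.elim_inl]
      split_ifs with h
      · exact Finset.card_range k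
      · rw [Nat.card_Ico]; omega
    · simp only [hLdef, Sum.elim_inr]
      split_ifs with h
      · have h0 : (0:ℕ) ∉ Finset.Ico k (2*k-1) := by
          simp only [Finset.mem_Ico]; omega
        rw [Finset.card_insert_of_notMem h0, Nat.card_Ico]; omega
      · rw [Nat.card_Ico]; omega
  obtain ⟨f, ⟨hmem, hproper⟩, hprop⟩ := hPC L hassign
  -- dispatch k = 0
  rcases Nat.eq_zero_or_pos k with hk0 | hk1
  · subst hk0
    have h := hmem (Sum.inl ⟨0, hm⟩)
    rw [hLdef] at h
    simp only [Sum.elim_inl] at h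
    rw [if_neg (Nat.not_lt_zero _), Nat.add_zero, Finset.Ico_self] at h
    exact absurd h (Finset.notMem_empty _)
  -- multiplicity computations
  have hmult0 : mult L 0 = 2*k := by
    unfold mult
    rw [filter_sum_card']
    have e1 : ((univ : Finset (Fin m)).filter (fun i => 0 ∈ L (Sum.inl i))).card = k := by
      rw [← card_filter_fin_lt' m k hk]
      congr 1
      apply Finset.filter_congr
      intro i _
      simp only [hLdef, Sum.elim_inl]
      split_ifs with h <;> simp only [Finset.mem_range, Finset.mem_Ico] <;>
        constructor <;> intro hh <;> omega
    have e2 : ((univ : Finset (Fin m)).filter (fun j => 0 ∈ L (Sum.inr j))).card = k := by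
      rw [← card_filter_fin_lt' m k hk]
      congr 1
      apply Finset.filter_congr
      intro j _
      simp only [hLdef, Sum.elim_inr]
      split_ifs with h <;>
        simp only [Finset.mem_insert, Finset.mem_Ico, true_or, eq_self_iff_true] <;>
        constructor <;> intro hh <;> first | omega | simp at hh ⊢
    rw [e1, e2]; omega
  have hmultmid : ∀ c : ℕ, 1 ≤ c → c < 2*k - 1 → mult L c = k := by
    intro c hc1 hc2
    unfold mult
    rw [filter_sum_card']
    by_cases hck : c < k
    · have e1 : ((univ : Finset (Fin m)).filter (fun i => c ∈ L (Sum.inl i))).card = k := by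
        rw [← card_filter_fin_lt' m k hk]
        congr 1
        apply Finset.filter_congr
        intro i _
        simp only [hLdef, Sum.elim_inl]
        split_ifs with h <;> simp only [Finset.mem_range, Finset.mem_Ico] <;>
          constructor <;> intro hh <;> omega
      have e2 : ((univ : Finset (Fin m)).filter (fun j => c ∈ L (Sum.inr j))) = ∅ := by
        rw [Finset.filter_eq_empty_iff]
        intro j _
        simp only [hLdef, Sum.elim_inr]
        split_ifs with h <;> simp only [Finset.mem_insert, Finset.mem_Ico] <;> omega
      rw [e1, e2, Finset.card_empty]
      omega
    · have e1 : ((univ : Finset (Fin m)).filter (fun i => c ∈ L (Sum.inl i))) = ∅ := by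
        rw [Finset.filter_eq_empty_iff]
        intro i _
        simp only [hLdef, Sum.elim_inl]
        split_ifs with h <;> simp only [Finset.mem_range, Finset.mem_Ico] <;> omega
      have e2 : ((univ : Finset (Fin m)).filter (fun j => c ∈ L (Sum.inr j))).card = k := by
        rw [← card_filter_fin_lt' m k hk]
        congr 1
        apply Finset.filter_congr
        intro j _
        simp only [hLdef, Sum.elim_inr]
        split_ifs with h <;> simp only [Finset.mem_insert, Finset.mem_Ico] <;>
          constructor <;> intro hh <;> omega
      rw [e1, e2, Finset.card_empty]
      omega
  -- color classes of middle colors have size exactly 1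
  have hclasscard : ∀ v : Fin m ⊕ Fin m, 1 ≤ f v → f v < 2*k - 1 →
      ((univ : Finset (Fin m ⊕ Fin m)).filter (fun w => f w = f v)).card = 1 := by
    intro v h1 h2
    have hpal : f v ∈ palette L := Finset.mem_biUnion.mpr ⟨v, Finset.mem_univ v, hmem v⟩
    have h := hprop (f v) hpal
    rw [hmultmid (f v) h1 h2] at h
    rcases h with h | h <;> rw [h]
    · exact Nat.div_self hk1
    · exact Nat.div_eq_of_lt_le (by omega) (by omega)
  -- color 0 is used exactly twice
  have h0pal : (0:ℕ) ∈ palette L := by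
    refine Finset.mem_biUnion.mpr ⟨Sum.inl ⟨0, hm⟩, Finset.mem_univ _, ?_⟩
    simp only [hLdef, Sum.elim_inl]
    rw [if_pos (by simpa using hk1)]
    simpa using hk1
  have h0card : ((univ : Finset (Fin m ⊕ Fin m)).filter (fun v => f v = 0)).card = 2 := by
    have h := hprop 0 h0pal
    rw [hmult0] at h
    rcases h with h | h <;> rw [h]
    · exact Nat.div_eq_of_lt_le (by omega) (by omega)
    · exact Nat.div_eq_of_lt_le (by omega) (by omega)
  obtain ⟨v1, hv1, v2, hv2, hne⟩ := Finset.one_lt_card.mp (by rw [h0card]; norm_num)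
  rw [Finset.mem_filter] at hv1 hv2
  have hfv1 : f v1 = 0 := hv1.2
  have hfv2 : f v2 = 0 := hv2.2
  -- both zero-colored vertices are on the same side; derive contradictions
  have hbothleft : ∀ i1 : Fin m, f (Sum.inl i1) = 0 → ∀ i2 : Fin m,
      f (Sum.inl i2) = 0 → False := by
    intro i1 hi1 _ _
    have hright : ∀ j : Fin m, (j:ℕ) < k → f (Sum.inr j) ∈ Finset.Ico k (2*k-1) := by
      intro j hj
      have h1 := hmem (Sum.inr j)
      simp only [hLdef, Sum.elim_inr, if_pos hj, Finset.mem_insert] at h1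
      rcases h1 with h1 | h1
      · exact absurd (h1.trans hi1.symm) (hproper (adj_rl m i1 j))
      · exact h1
    have hcard : ((univ : Finset (Fin m)).filter (fun j : Fin m => (j:ℕ) < k)).card ≤
        (Finset.Ico k (2*k-1)).card := by
      apply Finset.card_le_card_of_injOn (fun j => f (Sum.inr j))
      · intro j hj
        rw [Finset.mem_coe, Finset.mem_filter] at hj
        exact hright j hj.2
      · intro a ha b hb hab
        simp only [Finset.coe_filter, Set.mem_setOf_eq, Finset.mem_univ, true_and] at ha hb
        have hfa := Finset.mem_Ico.mp (hright a ha)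
        have hc := hclasscard (Sum.inr a) (by omega) (by omega)
        have hmema : Sum.inr a ∈ (univ.filter (fun w => f w = f (Sum.inr a))) := by
          simp
        have hmemb : Sum.inr b ∈ (univ.filter (fun w => f w = f (Sum.inr a))) := by
          simp [hab]
        have := Finset.card_le_one.mp (le_of_eq hc) _ hmema _ hmemb
        exact Sum.inr.inj this
    rw [card_filter_fin_lt' m k hk, Nat.card_Ico] at hcard
    omega
  have hbothright : ∀ j1 : Fin m, f (Sum.inr j1) = 0 → ∀ j2 : Fin m,
      f (Sum.inr j2) = 0 → False := by
    intro j1 hj1 _ _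
    have hleft : ∀ i : Fin m, (i:ℕ) < k → f (Sum.inl i) ∈ Finset.Ico 1 k := by
      intro i hi
      have h1 := hmem (Sum.inl i)
      simp only [hLdef, Sum.elim_inl, if_pos hi, Finset.mem_range] at h1
      have hne0 : f (Sum.inl i) ≠ 0 := fun h => hproper (adj_lr m i j1) (h.trans hj1.symm)
      exact Finset.mem_Ico.mpr ⟨Nat.one_le_iff_ne_zero.mpr hne0, h1⟩
    have hcard : ((univ : Finset (Fin m)).filter (fun i : Fin m => (i:ℕ) < k)).card ≤
        (Finset.Ico 1 k).card := by
      apply Finset.card_le_card_of_injOn (fun i => f (Sum.inl i))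
      · intro i hi
        rw [Finset.mem_coe, Finset.mem_filter] at hi
        exact hleft i hi.2
      · intro a ha b hb hab
        simp only [Finset.coe_filter, Set.mem_setOf_eq, Finset.mem_univ, true_and] at ha hb
        have hfa := Finset.mem_Ico.mp (hleft a ha)
        have hc := hclasscard (Sum.inl a) (by omega) (by omega)
        have hmema : Sum.inl a ∈ (univ.filter (fun w => f w = f (Sum.inl a))) := by
          simp
        have hmemb : Sum.inl b ∈ (univ.filter (fun w => f w = f (Sum.inl a))) := by
          simp [hab]
        have := Finset.card_le_one.mp (le_of_eq hc) _ hmema _ hmemb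
        exact Sum.inl.inj this
    rw [card_filter_fin_lt' m k hk, Nat.card_Ico] at hcard
    omega
  rcases v1 with i1 | j1 <;> rcases v2 with i2 | j2
  · exact hbothleft i1 hfv1 i2 hfv2
  · exact hproper (adj_lr m i1 j2) (hfv1.trans hfv2.symm)
  · exact hproper (adj_rl m i2 j1) (hfv1.trans hfv2.symm)
  · exact hbothright j1 hfv1 j2 hfv2

/-- `K_{m,m}` is proportionally `(2m+1)`-choosable (via Hall's theorem). -/
lemma PCbig (m : ℕ) : ProportionallyChoosable (KBip m m) (2*m+1) := by
  intro L hL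
  have hall : ∀ s : Finset (Fin m ⊕ Fin m), s.card ≤ (s.biUnion L).card := by
    intro s
    rcases s.eq_empty_or_nonempty with rfl | ⟨v, hv⟩
    · simp
    · calc s.card ≤ Fintype.card (Fin m ⊕ Fin m) := Finset.card_le_univ s
        _ ≤ 2*m+1 := by simp; omega
        _ = (L v).card := (hL v).symm
        _ ≤ (s.biUnion L).card := by
            apply Finset.card_le_card
            intro c hc
            exact Finset.mem_biUnion.mpr ⟨v, hv, hc⟩
  obtain ⟨f, hinj, hf⟩ := (Finset.all_card_le_biUnion_card_iff_exists_injective L).mp hall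
  refine ⟨f, ⟨hf, fun u w hadj h => hadj.ne (hinj h)⟩, ?_⟩
  intro c hc
  have hclass : ((univ : Finset (Fin m ⊕ Fin m)).filter (fun v => f v = c)).card ≤ 1 := by
    apply Finset.card_le_one.mpr
    intro a ha b hb
    rw [Finset.mem_filter] at ha hb
    exact hinj (ha.2.trans hb.2.symm)
  have hmle : mult L c ≤ 2*m := by
    unfold mult
    calc _ ≤ (univ : Finset (Fin m ⊕ Fin m)).card := Finset.card_filter_le _ _
      _ = 2*m := by simp; omega
  have hm1 : 1 ≤ mult L c := by
    obtain ⟨v, _, hv⟩ := Finset.mem_biUnion.mp hc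
    unfold mult
    exact Finset.card_pos.mpr ⟨v, Finset.mem_filter.mpr ⟨Finset.mem_univ v, hv⟩⟩
  interval_cases hcc : ((univ : Finset (Fin m ⊕ Fin m)).filter (fun v => f v = c)).card
  · left
    exact (Nat.div_eq_of_lt (by omega)).symm
  · right
    exact (Nat.div_eq_of_lt_le (by omega) (by omega)).symm

/-- For `m ≥ 1`, `K_{m,m}` is not proportionally `m`-choosable, i.e.
`χ_pc(K_{m,m}) > m`. -/
theorem stmt16 (m : ℕ) (hm : 1 ≤ m) :
    ¬ ProportionallyChoosable (KBip m m) m ∧ m < propChoiceNumber (KBip m m) := by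
  constructor
  · exact notPC m m hm le_rfl
  · have hne : {k | ProportionallyChoosable (KBip m m) k}.Nonempty := ⟨2*m+1, PCbig m⟩
    have hmem := Nat.sInf_mem hne
    by_contra h
    push_neg at h
    exact notPC m _ hm h hmem
end
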